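/- arXiv:2309.14443 — 6 statements merged into one kernel-verified Lean document; each statement's English description precedes it below -/
import Mathlib

section
/- For d = 2 and p = 55/159, one has M^{d,p} < 1; that is, sup_{λ ≥ 0} f^{2,55/159}(λ) < 1. (This is the analytic inequality underlying the bound S_2 ≤ 55/159 in Theorem 1.) -/
open Real Finset

/-- `frogT x y u = s_{u+1,u}(x,y)`, the diagonal of the recursion. -/
noncomputable def frogT (x y : ℝ) : ℕ → ℝ
  | 0 => 1
  | k + 1 => 1 - ∑ i ∈ (Finset.range (k + 1)).attach,
      (((k + 1).choose i.1 : ℕ) : ℝ) * (x * y ^ (i.1 + 1)) ^ (k + 1 - i.1) * frogT x y i.1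
  decreasing_by exact Finset.mem_range.mp i.2

/-- `frogS d u x y = s_{d,u}(x,y)`. -/
noncomputable def frogS (d u : ℕ) (x y : ℝ) : ℝ :=
  (((d - 1).choose u : ℕ) : ℝ) * (x * y ^ (u + 1)) ^ (d - 1 - u) * frogT x y u

noncomputable def pstar (d : ℕ) (p : ℝ) : ℝ := p * ((d : ℝ) - 1) / ((d : ℝ) - ((d : ℝ) + 1) * p)

noncomputable def phat (p : ℝ) : ℝ := p / (1 - p)

noncomputable def Phi (d : ℕ) (p : ℝ) : ℝ := Real.exp (-(1 - pstar d p) / (d : ℝ))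

noncomputable def Lam (d : ℕ) (p l : ℝ) : ℝ := Real.exp (-((1 - phat p) * l) / ((d : ℝ) - 1))

noncomputable def frogF (d : ℕ) (p l : ℝ) : ℝ :=
  Real.exp (-(pstar d p)) * ∑ u ∈ Finset.range d,
    Real.exp ((1 - phat p * (1 + (u : ℝ))) * l) * frogS d u (Phi d p) (Lam d p l)

noncomputable def frogM (d : ℕ) (p : ℝ) : ℝ := sSup (frogF d p '' Set.Ici 0)
lemma frogExpb1 : Real.exp (-(104/153) : ℝ) ≤ 50675/100000 := by
  have h := Real.sum_le_exp_of_nonneg (x := (104:ℝ)/153) (by norm_num) 8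
  have h2 : (100000:ℝ)/50675 ≤ ∑ i ∈ Finset.range 8, ((104:ℝ)/153)^i / (Nat.factorial i : ℝ) := by
    simp only [Finset.sum_range_succ, Finset.sum_range_zero]
    norm_num [Nat.factorial]
  have h3 : (100000:ℝ)/50675 ≤ Real.exp (104/153) := le_trans h2 h
  rw [Real.exp_neg]
  calc (Real.exp ((104:ℝ)/153))⁻¹ ≤ ((100000:ℝ)/50675)⁻¹ := by
        apply inv_anti₀ (by norm_num) h3
    _ ≤ 50675/100000 := by norm_num

lemma frogExpb3 : Real.exp (-(49/153) : ℝ) ≤ 725960/1000000 := by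
  have h := Real.sum_le_exp_of_nonneg (x := (49:ℝ)/153) (by norm_num) 8
  have h2 : (1000000:ℝ)/725960 ≤ ∑ i ∈ Finset.range 8, ((49:ℝ)/153)^i / (Nat.factorial i : ℝ) := by
    simp only [Finset.sum_range_succ, Finset.sum_range_zero]
    norm_num [Nat.factorial]
  rw [Real.exp_neg]
  calc (Real.exp ((49:ℝ)/153))⁻¹ ≤ ((1000000:ℝ)/725960)⁻¹ := by
        apply inv_anti₀ (by norm_num) (le_trans h2 h)
    _ ≤ 725960/1000000 := by norm_num

lemma frogRpb : ((6:ℝ)/55) ^ ((6:ℝ)/49) ≤ 7624/10000 := by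
  have h6 : ((6:ℝ)/55) ^ ((6:ℝ)/49) = (((6:ℝ)/55) ^ (6:ℕ)) ^ ((49:ℝ)⁻¹) := by
    rw [← Real.rpow_natCast ((6:ℝ)/55) 6, ← Real.rpow_mul (by norm_num)]
    norm_num
  have h7 : ((7624:ℝ)/10000) = (((7624:ℝ)/10000) ^ (49:ℕ)) ^ ((49:ℝ)⁻¹) := by
    rw [← Real.rpow_natCast (((7624:ℝ)/10000)) 49, ← Real.rpow_mul (by norm_num)]
    norm_num
  rw [h6, h7]
  apply Real.rpow_le_rpow (by positivity) (by norm_num) (by norm_num)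

lemma frogKey (t : ℝ) (ht : 0 ≤ t) :
    t ^ 6 ≤ Real.exp (-(49/153)) * t ^ 55
      + 49/55 * (((6:ℝ)/55) ^ ((6:ℝ)/49) * Real.exp (2/51)) := by
  have h := Real.geom_mean_le_arith_mean2_weighted
    (w₁ := 6/55) (w₂ := 49/55)
    (p₁ := 55/6 * Real.exp (-(49/153)) * t ^ 55)
    (p₂ := ((6:ℝ)/55) ^ ((6:ℝ)/49) * Real.exp (2/51))
    (by norm_num) (by norm_num) (by positivity) (by positivity) (by norm_num)
  have e1 : ((55:ℝ)/6 * Real.exp (-(49/153)) * t ^ 55) ^ ((6:ℝ)/55)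
      = ((55:ℝ)/6) ^ ((6:ℝ)/55) * Real.exp (-(98/2805)) * t ^ 6 := by
    rw [Real.mul_rpow (by positivity) (by positivity),
        Real.mul_rpow (by positivity) (Real.exp_nonneg _),
        ← Real.exp_mul, ← Real.rpow_natCast t 55, ← Real.rpow_mul ht]
    norm_num
  have e2 : (((6:ℝ)/55) ^ ((6:ℝ)/49) * Real.exp (2/51)) ^ ((49:ℝ)/55)
      = ((6:ℝ)/55) ^ ((6:ℝ)/55) * Real.exp (98/2805) := by
    rw [Real.mul_rpow (by positivity) (Real.exp_nonneg _), ← Real.exp_mul,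
        ← Real.rpow_mul (by norm_num)]
    norm_num
  rw [e1, e2] at h
  have e3 : ((55:ℝ)/6) ^ ((6:ℝ)/55) * Real.exp (-(98/2805)) * t ^ 6
      * (((6:ℝ)/55) ^ ((6:ℝ)/55) * Real.exp (98/2805))
      = (((55:ℝ)/6) ^ ((6:ℝ)/55) * ((6:ℝ)/55) ^ ((6:ℝ)/55))
        * (Real.exp (-(98/2805)) * Real.exp (98/2805)) * t ^ 6 := by ring
  rw [e3, ← Real.mul_rpow (by norm_num) (by norm_num), ← Real.exp_add] at h
  norm_num [Real.one_rpow] at h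
  linarith [h]

lemma frogS20 (x y : ℝ) : frogS 2 0 x y = x * y := by
  simp [frogS, frogT]

lemma frogS21 (x y : ℝ) : frogS 2 1 x y = 1 - x * y := by
  rw [frogS, frogT]
  rw [Finset.sum_attach (Finset.range 1)
    (fun i => ((Nat.choose 1 i : ℕ) : ℝ) * (x * y ^ (i + 1)) ^ (1 - i) * frogT x y i)]
  simp [frogT]

/-- Theorem 1 (analytic core): `M^{2,55/159} < 1`, underlying `S_2 ≤ 55/159`. -/
theorem frogM_lt_one_d2 : frogM 2 ((55 : ℝ) / 159) < 1 := by
  have hbound : ∀ x ∈ frogF 2 ((55:ℝ)/159) '' Set.Ici (0:ℝ), x ≤ 9999/10000 := by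
    rintro x ⟨l, hl, rfl⟩
    have hps : pstar 2 ((55:ℝ)/159) = 55/153 := by
      norm_num [pstar]
    have hph : phat ((55:ℝ)/159) = 55/104 := by norm_num [phat]
    have hPhi : Phi 2 ((55:ℝ)/159) = Real.exp (-(49/153)) := by
      rw [Phi, hps]; norm_num
    have hLam : Lam 2 ((55:ℝ)/159) l = Real.exp (-(49/104) * l) := by
      rw [Lam, hph]; norm_num
    rw [frogF, Finset.sum_range_succ, Finset.sum_range_one, hps, hph, hPhi, hLam,
        frogS20, frogS21]
    set t : ℝ := Real.exp (-(1/104) * l) with htdef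
    have ht : (0:ℝ) ≤ t := le_of_lt (Real.exp_pos _)
    have F1 : Real.exp ((1 - 55/104 * (1 + ((0:ℕ):ℝ))) * l)
        * (Real.exp (-(49/153)) * Real.exp (-(49/104) * l)) = Real.exp (-(49/153)) := by
      rw [mul_comm (Real.exp (-(49/153))) (Real.exp (-(49/104) * l)), ← mul_assoc,
          ← Real.exp_add,
          show (1 - 55/104 * (1 + ((0:ℕ):ℝ))) * l + -(49/104) * l = 0 by push_cast; ring,
          Real.exp_zero, one_mul]
    have F2 : Real.exp ((1 - 55/104 * (1 + ((1:ℕ):ℝ))) * l) = t ^ 6 := by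
      rw [htdef, ← Real.exp_nat_mul]
      congr 1
      push_cast; ring
    have F3 : Real.exp (-(49/104) * l) = t ^ 49 := by
      rw [htdef, ← Real.exp_nat_mul]
      congr 1
      push_cast; ring
    rw [F1, F2, F3]
    have hk := frogKey t ht
    calc Real.exp (-(55/153 : ℝ)) * (Real.exp (-(49/153)) + t ^ 6 * (1 - Real.exp (-(49/153)) * t ^ 49))
        = Real.exp (-(55/153 : ℝ)) * (Real.exp (-(49/153)) + (t ^ 6 - Real.exp (-(49/153)) * t ^ 55)) := by
          ring
      _ ≤ Real.exp (-(55/153 : ℝ)) * (Real.exp (-(49/153))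
            + 49/55 * (((6:ℝ)/55) ^ ((6:ℝ)/49) * Real.exp (2/51))) := by
          apply mul_le_mul_of_nonneg_left _ (Real.exp_nonneg _)
          linarith
      _ = Real.exp (-(104/153 : ℝ))
            + 49/55 * (((6:ℝ)/55) ^ ((6:ℝ)/49) * Real.exp (-(49/153))) := by
          rw [show Real.exp (-(104/153:ℝ)) = Real.exp (-(55/153)) * Real.exp (-(49/153)) by
                rw [← Real.exp_add]; norm_num,
              show Real.exp (-(49/153:ℝ)) = Real.exp (-(55/153)) * Real.exp (2/51) by
                rw [← Real.exp_add]; norm_num]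
          ring
      _ ≤ 50675/100000 + 49/55 * ((7624/10000) * (725960/1000000)) := by
          have hm : 49/55 * (((6:ℝ)/55) ^ ((6:ℝ)/49) * Real.exp (-(49/153)))
              ≤ 49/55 * ((7624/10000) * (725960/1000000)) := by
            apply mul_le_mul_of_nonneg_left _ (by norm_num)
            exact mul_le_mul frogRpb frogExpb3 (Real.exp_nonneg _) (by norm_num)
          linarith [frogExpb1]
      _ ≤ 9999/10000 := by norm_num
  have h1 : frogM 2 ((55:ℝ)/159) ≤ 9999/10000 := Real.sSup_le hbound (by norm_num)
  linarith
end

section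
/- For d = 3 and p = 42/145, one has M^{d,p} < 1; that is, sup_{λ ≥ 0} f^{3,42/145}(λ) < 1. (This is the analytic inequality underlying the bound S_3 ≤ 42/145 in Theorem 1.) -/
open Real Finset

lemma chord (n : ℕ) (a b t : ℝ) (h0 : 0 ≤ a) (hat : a ≤ t) (htb : t ≤ b) (hab : a < b) :
    (b - a) * t ^ n ≤ (b - t) * a ^ n + (t - a) * b ^ n := by
  have hba : (0:ℝ) < b - a := by linarith
  have hc := (convexOn_pow (𝕜 := ℝ) n).2 (Set.mem_Ici.2 h0)
    (Set.mem_Ici.2 (h0.trans (hat.trans htb)))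
    (show (0:ℝ) ≤ (b - t) / (b - a) from div_nonneg (by linarith) hba.le)
    (show (0:ℝ) ≤ (t - a) / (b - a) from div_nonneg (by linarith) hba.le)
    (show (b - t) / (b - a) + (t - a) / (b - a) = 1 by
      rw [← add_div, show b - t + (t - a) = b - a by ring, div_self hba.ne'])
  simp only [smul_eq_mul] at hc
  have key : (b - t) / (b - a) * a + (t - a) / (b - a) * b = t := by
    field_simp
    ring
  rw [key] at hc
  have h2 := mul_le_mul_of_nonneg_left hc hba.le
  have e2 : (b - a) * ((b - t) / (b - a) * a ^ n + (t - a) / (b - a) * b ^ n)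
      = (b - t) * a ^ n + (t - a) * b ^ n := by
    field_simp
  linarith [h2, e2.symm ▸ h2]

lemma tangent (n : ℕ) (m t : ℝ) (hm : 0 < m) (ht : 0 ≤ t) :
    m ^ (n + 1) + (n + 1 : ℝ) * m ^ n * (t - m) ≤ t ^ (n + 1) := by
  have h : (-2 : ℝ) ≤ t / m - 1 := by
    have : 0 ≤ t / m := div_nonneg ht hm.le
    linarith
  have hb := one_add_mul_le_pow h (n + 1)
  have e1 : (1 : ℝ) + (t / m - 1) = t / m := by ring
  rw [e1] at hb
  have h2 := mul_le_mul_of_nonneg_left hb (pow_pos hm (n + 1)).le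
  rw [div_pow, mul_div_cancel₀ _ (pow_pos hm (n+1)).ne'] at h2
  have e2 : m ^ (n + 1) * (1 + (↑(n + 1) : ℝ) * (t / m - 1))
      = m ^ (n + 1) + (n + 1 : ℝ) * m ^ n * (t - m) := by
    have : m ^ (n+1) = m ^ n * m := pow_succ m n
    push_cast
    field_simp
    ring
  linarith [e2 ▸ h2]
set_option maxHeartbeats 4000000 in
set_option maxRecDepth 4000 in
lemma Gle (t : ℝ) (h0 : (0:ℝ) ≤ t) (h1 : t ≤ 1) :
    (79575464/100000000 : ℝ)^2 + 2*(79575464/100000000)*t^84 - 2*(79575458/100000000)^2*t^145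
      + t^46 - ((79575458/100000000)^2 + 2*(79575458/100000000))*t^168
      + 2*(79575464/100000000)^2*t^229 ≤ (13695815/10000000 : ℝ) := by
  rcases le_or_gt t (49/50) with h | h
  · have p46 : t^46 ≤ ((49:ℝ)/50)^46 := pow_le_pow_left₀ h0 h 46
    have p84 : t^84 ≤ ((49:ℝ)/50)^84 := pow_le_pow_left₀ h0 h 84
    have p229 : t^229 ≤ ((49:ℝ)/50)^229 := pow_le_pow_left₀ h0 h 229
    have n145 : (0:ℝ) ≤ t^145 := pow_nonneg h0 145
    have n168 : (0:ℝ) ≤ t^168 := pow_nonneg h0 168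
    nlinarith [p46, p84, p229, n145, n168]
  rcases le_or_gt t (98653/100000) with hB | h
  · have c46 := chord 46 (49/50) (98653/100000) t (by norm_num) h.le hB (by norm_num)
    have c84 := chord 84 (49/50) (98653/100000) t (by norm_num) h.le hB (by norm_num)
    have c229 := chord 229 (49/50) (98653/100000) t (by norm_num) h.le hB (by norm_num)
    have t145 := tangent 144 (196653/200000) t (by norm_num) h0
    have t168 := tangent 167 (196653/200000) t (by norm_num) h0
    norm_num at t145 t168
    linarith
  rcases le_or_gt t (19777/20000) with hB | h
  · have c46 := chord 46 (98653/100000) (19777/20000) t (by norm_num) h.le hB (by norm_num)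
    have c84 := chord 84 (98653/100000) (19777/20000) t (by norm_num) h.le hB (by norm_num)
    have c229 := chord 229 (98653/100000) (19777/20000) t (by norm_num) h.le hB (by norm_num)
    have t145 := tangent 144 (98769/100000) t (by norm_num) h0
    have t168 := tangent 167 (98769/100000) t (by norm_num) h0
    norm_num at t145 t168
    linarith
  rcases le_or_gt t (197973/200000) with hB | h
  · have c46 := chord 46 (19777/20000) (197973/200000) t (by norm_num) h.le hB (by norm_num)
    have c84 := chord 84 (19777/20000) (197973/200000) t (by norm_num) h.le hB (by norm_num)
    have c229 := chord 229 (19777/20000) (197973/200000) t (by norm_num) h.le hB (by norm_num)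
    have t145 := tangent 144 (395743/400000) t (by norm_num) h0
    have t168 := tangent 167 (395743/400000) t (by norm_num) h0
    norm_num at t145 t168
    linarith
  rcases le_or_gt t (7923/8000) with hB | h
  · have c46 := chord 46 (197973/200000) (7923/8000) t (by norm_num) h.le hB (by norm_num)
    have c84 := chord 84 (197973/200000) (7923/8000) t (by norm_num) h.le hB (by norm_num)
    have c229 := chord 229 (197973/200000) (7923/8000) t (by norm_num) h.le hB (by norm_num)
    have t145 := tangent 144 (24753/25000) t (by norm_num) h0
    have t168 := tangent 167 (24753/25000) t (by norm_num) h0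
    norm_num at t145 t168
    linarith
  rcases le_or_gt t (24769/25000) with hB | h
  · have c46 := chord 46 (7923/8000) (24769/25000) t (by norm_num) h.le hB (by norm_num)
    have c84 := chord 84 (7923/8000) (24769/25000) t (by norm_num) h.le hB (by norm_num)
    have c229 := chord 229 (7923/8000) (24769/25000) t (by norm_num) h.le hB (by norm_num)
    have t145 := tangent 144 (396227/400000) t (by norm_num) h0
    have t168 := tangent 167 (396227/400000) t (by norm_num) h0
    norm_num at t145 t168
    linarith
  rcases le_or_gt t (49557/50000) with hB | h
  · have c46 := chord 46 (24769/25000) (49557/50000) t (by norm_num) h.le hB (by norm_num)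
    have c84 := chord 84 (24769/25000) (49557/50000) t (by norm_num) h.le hB (by norm_num)
    have c229 := chord 229 (24769/25000) (49557/50000) t (by norm_num) h.le hB (by norm_num)
    have t145 := tangent 144 (19819/20000) t (by norm_num) h0
    have t168 := tangent 167 (19819/20000) t (by norm_num) h0
    norm_num at t145 t168
    linarith
  rcases le_or_gt t (99173/100000) with hB | h
  · have c46 := chord 46 (49557/50000) (99173/100000) t (by norm_num) h.le hB (by norm_num)
    have c84 := chord 84 (49557/50000) (99173/100000) t (by norm_num) h.le hB (by norm_num)
    have c229 := chord 229 (49557/50000) (99173/100000) t (by norm_num) h.le hB (by norm_num)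
    have t145 := tangent 144 (198287/200000) t (by norm_num) h0
    have t168 := tangent 167 (198287/200000) t (by norm_num) h0
    norm_num at t145 t168
    linarith
  rcases le_or_gt t (99281/100000) with hB | h
  · have c46 := chord 46 (99173/100000) (99281/100000) t (by norm_num) h.le hB (by norm_num)
    have c84 := chord 84 (99173/100000) (99281/100000) t (by norm_num) h.le hB (by norm_num)
    have c229 := chord 229 (99173/100000) (99281/100000) t (by norm_num) h.le hB (by norm_num)
    have t145 := tangent 144 (99227/100000) t (by norm_num) h0
    have t168 := tangent 167 (99227/100000) t (by norm_num) h0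
    norm_num at t145 t168
    linarith
  rcases le_or_gt t (3979/4000) with hB | h
  · have c46 := chord 46 (99281/100000) (3979/4000) t (by norm_num) h.le hB (by norm_num)
    have c84 := chord 84 (99281/100000) (3979/4000) t (by norm_num) h.le hB (by norm_num)
    have c229 := chord 229 (99281/100000) (3979/4000) t (by norm_num) h.le hB (by norm_num)
    have t145 := tangent 144 (49689/50000) t (by norm_num) h0
    have t168 := tangent 167 (49689/50000) t (by norm_num) h0
    norm_num at t145 t168
    linarith
  rcases le_or_gt t (199589/200000) with hB | h
  · have c46 := chord 46 (3979/4000) (199589/200000) t (by norm_num) h.le hB (by norm_num)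
    have c84 := chord 84 (3979/4000) (199589/200000) t (by norm_num) h.le hB (by norm_num)
    have c229 := chord 229 (3979/4000) (199589/200000) t (by norm_num) h.le hB (by norm_num)
    have t145 := tangent 144 (398539/400000) t (by norm_num) h0
    have t168 := tangent 167 (398539/400000) t (by norm_num) h0
    norm_num at t145 t168
    linarith
  have c46 := chord 46 (199589/200000) (1) t (by norm_num) h.le h1 (by norm_num)
  have c84 := chord 84 (199589/200000) (1) t (by norm_num) h.le h1 (by norm_num)
  have c229 := chord 229 (199589/200000) (1) t (by norm_num) h.le h1 (by norm_num)
  have t145 := tangent 144 (399589/400000) t (by norm_num) h0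
  have t168 := tangent 167 (399589/400000) t (by norm_num) h0
  norm_num at t145 t168
  linarith

lemma frogT0 (x y : ℝ) : frogT x y 0 = 1 := by simp [frogT]

lemma frogT1 (x y : ℝ) : frogT x y 1 = 1 - x * y := by
  rw [frogT]
  rw [Finset.sum_attach (Finset.range 1) (fun i =>
    ((Nat.choose 1 i : ℕ) : ℝ) * (x * y ^ (i + 1)) ^ (1 - i) * frogT x y i)]
  simp [frogT0]

lemma frogT2 (x y : ℝ) : frogT x y 2 = 1 - (x*y)^2 - 2*(x*y^2)*(1 - x*y) := by
  rw [frogT]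
  rw [Finset.sum_attach (Finset.range 2) (fun i =>
    ((Nat.choose 2 i : ℕ) : ℝ) * (x * y ^ (i + 1)) ^ (2 - i) * frogT x y i)]
  rw [Finset.sum_range_succ, Finset.sum_range_one, frogT0, frogT1]
  norm_num
  ring

lemma formula (l : ℝ) : frogF 3 ((42:ℝ)/145) l =
    Real.exp (-(28/89)) * (Real.exp (-(61/267))^2 + 2*Real.exp (-(61/267))*Real.exp (-(l/206))^84
      - 2*Real.exp (-(61/267))^2*Real.exp (-(l/206))^145 + Real.exp (-(l/206))^46
      - (Real.exp (-(61/267))^2 + 2*Real.exp (-(61/267)))*Real.exp (-(l/206))^168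
      + 2*Real.exp (-(61/267))^2*Real.exp (-(l/206))^229) := by
  simp only [frogF, frogS, pstar, phat, Phi, Lam, Finset.sum_range_succ, Finset.sum_range_zero]
  norm_num [frogT0, frogT1, frogT2]
  rw [show (-(61 / 103 * l) / 2 : ℝ) = -(61/206*l) by ring]
  simp only [← Real.exp_nat_mul, ← Real.exp_add, mul_pow, ← Real.exp_sum]
  ring_nf
  simp only [← Real.exp_add]
  ring_nf
  try simp only [← Real.exp_add]
  try ring_nf


lemma xlb : (79575458/100000000 : ℝ) ≤ Real.exp (-(61/267)) ∧
    Real.exp (-(61/267)) ≤ (79575464/100000000 : ℝ) := by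
  have habs : |(-(61/267) : ℝ)| = 61/267 := by
    rw [abs_of_nonpos (by norm_num)]; norm_num
  have h := Real.exp_bound (x := (-(61/267) : ℝ)) (by rw [habs]; norm_num)
    (n := 8) (by norm_num)
  rw [habs, abs_sub_le_iff] at h
  obtain ⟨h1, h2⟩ := h
  norm_num [Finset.sum_range_succ, Nat.factorial] at h1 h2
  constructor <;> linarith

lemma E2ub : Real.exp (-(28/89)) ≤ (73007660/100000000 : ℝ) := by
  have habs : |(-(28/89) : ℝ)| = 28/89 := by
    rw [abs_of_nonpos (by norm_num)]; norm_num
  have h := Real.exp_bound (x := (-(28/89) : ℝ)) (by rw [habs]; norm_num)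
    (n := 10) (by norm_num)
  rw [habs, abs_sub_le_iff] at h
  obtain ⟨h1, h2⟩ := h
  norm_num [Finset.sum_range_succ, Nat.factorial] at h1 h2
  linarith

/-- Theorem 1 (analytic core): `M^{3,42/145} < 1`, underlying `S_3 ≤ 42/145`. -/
theorem frogM_lt_one_d3 : frogM 3 ((42 : ℝ) / 145) < 1 := by
  have hsup : sSup (frogF 3 ((42:ℝ)/145) '' Set.Ici 0) ≤ 19999/20000 := by
    apply Real.sSup_le _ (by norm_num)
    rintro y ⟨l, hl, rfl⟩
    have hl0 : (0:ℝ) ≤ l := hl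
    rw [formula]
    set X := Real.exp (-(61/267)) with hX
    set T := Real.exp (-(l/206)) with hT
    have hXpos : 0 < X := Real.exp_pos _
    have hTpos : 0 < T := Real.exp_pos _
    have hT1 : T ≤ 1 := by
      rw [hT, show (1:ℝ) = Real.exp 0 from Real.exp_zero.symm]
      exact Real.exp_le_exp.mpr (by linarith)
    obtain ⟨hx1, hx2⟩ := xlb
    rw [← hX] at hx1 hx2
    have hG : X^2 + 2*X*T^84 - 2*X^2*T^145 + T^46 - (X^2 + 2*X)*T^168 + 2*X^2*T^229
        ≤ (79575464/100000000 : ℝ)^2 + 2*(79575464/100000000)*T^84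
          - 2*(79575458/100000000)^2*T^145 + T^46
          - ((79575458/100000000)^2 + 2*(79575458/100000000))*T^168
          + 2*(79575464/100000000)^2*T^229 := by
      have h84 : 0 ≤ ((79575464/100000000 : ℝ) - X) * T^84 :=
        mul_nonneg (by linarith) (pow_nonneg hTpos.le 84)
      have hXsq : X^2 ≤ ((79575464/100000000 : ℝ))^2 := by nlinarith
      have hXsq' : ((79575458/100000000 : ℝ))^2 ≤ X^2 := by nlinarith
      have h145 : 0 ≤ (X^2 - (79575458/100000000 : ℝ)^2) * T^145 :=
        mul_nonneg (by linarith) (pow_nonneg hTpos.le 145)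
      have h168 : 0 ≤ ((X^2 + 2*X) - ((79575458/100000000 : ℝ)^2
          + 2*(79575458/100000000))) * T^168 :=
        mul_nonneg (by linarith) (pow_nonneg hTpos.le 168)
      have h229 : 0 ≤ (((79575464/100000000 : ℝ))^2 - X^2) * T^229 :=
        mul_nonneg (by linarith) (pow_nonneg hTpos.le 229)
      nlinarith [h84, h145, h168, h229, hXsq]
    have hGC := Gle T hTpos.le hT1
    have hE2 := E2ub
    have hexp_pos : (0:ℝ) < Real.exp (-(28/89)) := Real.exp_pos _
    calc Real.exp (-(28/89)) * (X^2 + 2*X*T^84 - 2*X^2*T^145 + T^46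
          - (X^2 + 2*X)*T^168 + 2*X^2*T^229)
        ≤ Real.exp (-(28/89)) * (13695815/10000000 : ℝ) := by
          apply mul_le_mul_of_nonneg_left (le_trans hG hGC) hexp_pos.le
      _ ≤ (73007660/100000000 : ℝ) * (13695815/10000000 : ℝ) := by
          apply mul_le_mul_of_nonneg_right hE2 (by norm_num)
      _ ≤ 19999/20000 := by norm_num
  have : frogM 3 ((42:ℝ)/145) ≤ 19999/20000 := hsup
  linarith [this, show (19999/20000 : ℝ) < 1 by norm_num]
end

section
/- For d = 6 and p = 46/197, one has M^{d,p} < 1; that is, sup_{λ ≥ 0} f^{6,46/197}(λ) < 1. (This is the analytic inequality underlying the bound S_6 ≤ 46/197 in Theorem 1.) -/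
open Real Finset

namespace FrogAux

/-! ### Fast rational power -/

def qpowA : ℕ → ℚ → ℕ → ℚ
  | 0, _, _ => 1
  | f+1, q, n =>
    if n = 0 then 1 else
      let h := qpowA f q (n/2)
      if n % 2 = 0 then h * h else h * h * q

def qpow (q : ℚ) (n : ℕ) : ℚ := qpowA (n+1) q n

lemma qpowA_eq : ∀ (f : ℕ) (q : ℚ) (n : ℕ), n < f → qpowA f q n = q ^ n
  | 0, _, _, h => absurd h (Nat.not_lt_zero _)
  | f+1, q, n, h => by
    rw [qpowA]
    by_cases h0 : n = 0
    · simp [h0]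
    · have h2 : n / 2 < f := by omega
      rw [if_neg h0, qpowA_eq f q _ h2]
      by_cases he : n % 2 = 0
      · rw [if_pos he, ← pow_add]; congr 1; omega
      · rw [if_neg he, ← pow_add, ← pow_succ]; congr 1; omega

lemma qpow_eq (q : ℚ) (n : ℕ) : qpow q n = q ^ n := qpowA_eq _ _ _ (Nat.lt_succ_self n)

/-! ### Data -/

def mons : List (ℤ × ℕ × ℕ) := [(1, 0, 125), (5, 1, 184), (-5, 1, 230), (10, 2, 201), (-20, 2, 268), (-10, 2, 293), (20, 2, 314), (10, 3, 176), (-30, 3, 264), (-30, 3, 310), (-10, 3, 314), (60, 3, 331), (60, 3, 356), (-60, 3, 377), (5, 4, 109), (-20, 4, 218), (-30, 4, 285), (-5, 4, 293), (60, 4, 306), (-20, 4, 310), (120, 4, 352), (40, 4, 356), (-120, 4, 373), (30, 4, 377), (-180, 4, 398), (120, 4, 419), (1, 5, 0), (-5, 5, 130), (-10, 5, 218), (-1, 5, 230), (20, 5, 239), (-10, 5, 264), (-5, 5, 268), (60, 5, 306), (10, 5, 314), (-60, 5, 327), (40, 5, 331), (30, 5, 352), (20, 5, 356), (-180, 5,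 373), (-60, 5, 377), (120, 5, 394), (-90, 5, 398), (240, 5, 419), (-120, 5, 440)]

def pts : List ℚ := [1/2, 3/4, 7/8, 29/32, 15/16, 61/64, 31/32, 125/128, 63/64, 253/256, 507/512, 1015/1024, 2031/2048, 127/128, 4065/4096, 2033/2048, 4067/4096, 1017/1024, 509/512, 255/256, 511/512, 1]

def xLq : ℚ := (133671762404142720636756674736169 / 151030270542339911330956815892480 : ℚ)
def xUq : ℚ := (668358812020713603221261624767667 / 755151352711699556654784079462400 : ℚ)
def eUq : ℚ := (720030844161331266274157101517581 / 940805017794873739650723427123200 : ℚ)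
def Kq : ℚ := (1633 / 1250 : ℚ)

/-! ### The rational checker -/

def cxQ (c : ℤ) (a : ℕ) : ℚ := if 0 < c then (c : ℚ) * qpow xUq a else (c : ℚ) * qpow xLq a

def coefB (l : ℚ) (k : ℕ) : ℚ :=
  (mons.map (fun m => cxQ m.1 m.2.1 * (m.2.2.choose k : ℚ) * qpow l (m.2.2 - k))).sum

def remB (u : ℚ) : ℚ :=
  (mons.map (fun m => if 0 < m.1 then (m.1 : ℚ) * qpow xUq m.2.1 * (m.2.2.choose 8 : ℚ) * qpow u (m.2.2 - 8) else 0)).sum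

def bnd (l u : ℚ) : ℚ :=
  coefB l 0 + max 0 (coefB l 1) * (u - l) + max 0 (coefB l 2) * qpow (u-l) 2
  + max 0 (coefB l 3) * qpow (u-l) 3 + max 0 (coefB l 4) * qpow (u-l) 4
  + max 0 (coefB l 5) * qpow (u-l) 5 + max 0 (coefB l 6) * qpow (u-l) 6
  + max 0 (coefB l 7) * qpow (u-l) 7 + remB u * qpow (u-l) 8

def chk : ℚ → List ℚ → Bool
  | _, [] => false
  | l, [u] => decide (l < u) && decide (0 ≤ remB u) && decide (bnd l u ≤ Kq)
  | l, u :: r => decide (l < u) && decide (0 ≤ remB u) && decide (bnd l u ≤ Kq) && chk u r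

set_option maxRecDepth 100000 in
set_option maxHeartbeats 40000000 in
theorem chk_true : chk 0 pts = true := by with_unfolding_all decide

/-! ### Taylor bounds for powers -/

lemma add_pow' (l δ : ℝ) (b : ℕ) :
    (l + δ) ^ b = ∑ k ∈ range (b+1), (b.choose k : ℝ) * l ^ (b-k) * δ ^ k := by
  rw [add_comm l δ, add_pow]
  exact Finset.sum_congr rfl fun k _ => by ring

lemma sum_ext {l δ : ℝ} {b m : ℕ} (h : b + 1 ≤ m) :
    ∑ k ∈ range m, (b.choose k : ℝ) * l ^ (b-k) * δ ^ k
      = ∑ k ∈ range (b+1), (b.choose k : ℝ) * l ^ (b-k) * δ ^ k := by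
  refine (Finset.sum_subset (Finset.range_subset_range.2 h) fun k _ hk => ?_).symm
  rw [Nat.choose_eq_zero_of_lt (by simpa using hk)]
  simp

lemma pow_taylor_ge {l δ : ℝ} (hl : 0 ≤ l) (hδ : 0 ≤ δ) (b m : ℕ) :
    ∑ k ∈ range m, (b.choose k : ℝ) * l ^ (b-k) * δ ^ k ≤ (l + δ) ^ b := by
  rcases le_or_gt m (b+1) with h | h
  · rw [add_pow']
    apply Finset.sum_le_sum_of_subset_of_nonneg (Finset.range_subset_range.2 h)
    intro k _ _; positivity
  · rw [sum_ext h.le, add_pow']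

lemma pow_taylor_le {l δ u : ℝ} (hl : 0 ≤ l) (hδ : 0 ≤ δ) (hu : l + δ ≤ u) (b m : ℕ) :
    (l + δ) ^ b ≤ (∑ k ∈ range m, (b.choose k : ℝ) * l ^ (b-k) * δ ^ k)
      + (b.choose m : ℝ) * u ^ (b-m) * δ ^ m := by
  rcases lt_or_ge b m with h | h
  · rw [add_pow', ← sum_ext h, Nat.choose_eq_zero_of_lt h]
    simp
  · rw [add_pow', ← Finset.sum_range_add_sum_Ico _ (by omega : m ≤ b + 1)]
    refine add_le_add le_rfl ?_
    have key : ∑ k ∈ Finset.Ico m (b+1), (b.choose k : ℝ) * l ^ (b-k) * δ ^ k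
        ≤ ∑ k ∈ Finset.Ico m (b+1), (b.choose m : ℝ) * ((b-m).choose (k-m) : ℝ) * l ^ (b-k) * δ ^ k := by
      refine Finset.sum_le_sum fun k hk => ?_
      simp only [Finset.mem_Ico] at hk
      have h1 : (b.choose k : ℝ) ≤ (b.choose m : ℝ) * ((b-m).choose (k-m) : ℝ) := by
        rw [← Nat.cast_mul, ← Nat.choose_mul hk.1]
        exact_mod_cast Nat.le_mul_of_pos_right _ (Nat.choose_pos (by omega : m ≤ k))
      have h2 : (0:ℝ) ≤ l ^ (b-k) * δ ^ k := by positivity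
      nlinarith [h2]
    refine key.trans ?_
    have e1 : ∑ k ∈ Finset.Ico m (b+1), (b.choose m : ℝ) * ((b-m).choose (k-m) : ℝ) * l ^ (b-k) * δ ^ k
        = (b.choose m : ℝ) * δ ^ m * ∑ j ∈ range (b-m+1), ((b-m).choose j : ℝ) * l ^ ((b-m)-j) * δ ^ j := by
      rw [Finset.mul_sum, Finset.sum_Ico_eq_sum_range]
      refine Finset.sum_congr (by congr 1; omega) fun j hj => ?_
      simp only [Finset.mem_range] at hj
      have e2 : m + j - m = j := by omega
      rw [e2]
      have e3 : b - (m + j) = b - m - j := by omega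
      rw [e3]
      have e4 : m + j = j + m := by omega
      rw [e4, pow_add]
      ring
    rw [e1, ← add_pow']
    have h3 : (0:ℝ) ≤ (l+δ) ^ (b-m) := by positivity
    have h4 : (l+δ) ^ (b-m) ≤ u ^ (b-m) := pow_le_pow_left₀ (by positivity) hu _
    have h5 : (0:ℝ) ≤ (b.choose m : ℝ) * δ ^ m := by positivity
    nlinarith

/-! ### List sum helpers -/

lemma map_sum_le {α : Type*} (L : List α) (f g : α → ℝ) (h : ∀ a ∈ L, f a ≤ g a) :
    (L.map f).sum ≤ (L.map g).sum := by
  induction L with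
  | nil => simp
  | cons a L ih =>
    simp only [List.map_cons, List.sum_cons]
    exact add_le_add (h a (by simp)) (ih fun b hb => h b (by simp [hb]))

lemma map_sum_add {α : Type*} (L : List α) (f g : α → ℝ) :
    (L.map (fun a => f a + g a)).sum = (L.map f).sum + (L.map g).sum := by
  induction L with
  | nil => simp
  | cons a L ih => simp [ih]; ring

lemma map_sum_swap {α : Type*} (L : List α) (F : α → ℕ → ℝ) (n : ℕ) :
    (L.map (fun a => ∑ k ∈ range n, F a k)).sum = ∑ k ∈ range n, (L.map (fun a => F a k)).sum := by
  induction L with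
  | nil => simp
  | cons a L ih => simp [ih, Finset.sum_add_distrib]

lemma map_sum_mul {α : Type*} (L : List α) (f : α → ℝ) (r : ℝ) :
    (L.map (fun a => f a * r)).sum = (L.map f).sum * r := by
  induction L with
  | nil => simp
  | cons a L ih => simp [ih]; ring

lemma cast_list_sum {α : Type*} (L : List α) (f : α → ℚ) :
    (((L.map f).sum : ℚ) : ℝ) = (L.map (fun a => ((f a : ℚ) : ℝ))).sum := by
  induction L with
  | nil => simp
  | cons a L ih =>
    simp only [List.map_cons, List.sum_cons, Rat.cast_add, ih]

/-! ### Per-interval soundness -/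

noncomputable def gFun (x t : ℝ) : ℝ :=
  (mons.map (fun m => (m.1 : ℝ) * x ^ m.2.1 * t ^ m.2.2)).sum

lemma mon_bound {x XL XU L δ U : ℝ} (hXL : 0 ≤ XL) (hx1 : XL ≤ x) (hx2 : x ≤ XU)
    (hL : 0 ≤ L) (hδ : 0 ≤ δ) (hu : L + δ ≤ U) (c : ℤ) (a b : ℕ) :
    (c:ℝ) * x ^ a * (L + δ) ^ b ≤
      (∑ k ∈ range 8, ((if 0 < c then (c:ℝ) * XU ^ a else (c:ℝ) * XL ^ a)
          * (b.choose k : ℝ) * L ^ (b-k)) * δ ^ k)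
        + (if 0 < c then (c:ℝ) * XU ^ a * (b.choose 8 : ℝ) * U ^ (b-8) else 0) * δ ^ 8 := by
  have hx0 : 0 ≤ x := hXL.trans hx1
  have hS0 : (0:ℝ) ≤ ∑ k ∈ range 8, (b.choose k : ℝ) * L ^ (b-k) * δ ^ k :=
    Finset.sum_nonneg fun k _ => by positivity
  by_cases hc : 0 < c
  · simp only [if_pos hc]
    have hc0 : (0:ℝ) ≤ c := by exact_mod_cast hc.le
    have h1 : x ^ a ≤ XU ^ a := pow_le_pow_left₀ hx0 hx2 a
    have h2 := pow_taylor_le hL hδ hu b 8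
    have h3 : (0:ℝ) ≤ (L+δ)^b := by positivity
    have key : (c:ℝ) * x ^ a * (L + δ) ^ b ≤ (c:ℝ) * XU ^ a *
        ((∑ k ∈ range 8, (b.choose k : ℝ) * L ^ (b-k) * δ ^ k)
          + (b.choose 8 : ℝ) * U ^ (b-8) * δ ^ 8) := by
      have hXU0 : (0:ℝ) ≤ XU ^ a := le_trans (by positivity) h1
      have e1 : (c:ℝ) * x ^ a * (L + δ) ^ b ≤ (c:ℝ) * XU ^ a * (L + δ) ^ b := by
        have := mul_le_mul_of_nonneg_right h1 h3
        nlinarith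
      refine e1.trans ?_
      have := mul_le_mul_of_nonneg_left h2 (by positivity : (0:ℝ) ≤ (c:ℝ) * XU ^ a)
      nlinarith
    refine key.trans (le_of_eq ?_)
    rw [mul_add, Finset.mul_sum]
    congr 1
    · exact Finset.sum_congr rfl fun k _ => by ring
    · ring
  · simp only [if_neg hc]
    push_neg at hc
    have hc0 : (c:ℝ) ≤ 0 := by exact_mod_cast hc
    have h1 : XL ^ a ≤ x ^ a := pow_le_pow_left₀ hXL hx1 a
    have h2 := pow_taylor_ge hL hδ b 8
    have h4 : XL ^ a * (∑ k ∈ range 8, (b.choose k : ℝ) * L ^ (b-k) * δ ^ k)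
        ≤ x ^ a * (L+δ) ^ b := by
      have hXa : (0:ℝ) ≤ XL ^ a := by positivity
      have := mul_le_mul h1 h2 hS0 (by positivity : (0:ℝ) ≤ x ^ a)
      linarith
    have key := mul_le_mul_of_nonpos_left h4 hc0
    calc (c:ℝ) * x ^ a * (L + δ) ^ b = (c:ℝ) * (x ^ a * (L+δ)^b) := by ring
      _ ≤ (c:ℝ) * (XL ^ a * ∑ k ∈ range 8, (b.choose k : ℝ) * L ^ (b-k) * δ ^ k) := key
      _ = (∑ k ∈ range 8, ((c:ℝ) * XL ^ a * (b.choose k : ℝ) * L ^ (b-k)) * δ ^ k) + 0 * δ ^ 8 := by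
        rw [zero_mul, add_zero, Finset.mul_sum, Finset.mul_sum]
        exact Finset.sum_congr rfl fun k _ => by ring

lemma cast_cxQ (c : ℤ) (a : ℕ) :
    ((cxQ c a : ℚ) : ℝ) = if 0 < c then (c:ℝ) * ((xUq : ℚ):ℝ) ^ a else (c:ℝ) * ((xLq : ℚ):ℝ) ^ a := by
  rw [cxQ, apply_ite (fun q : ℚ => (q : ℝ))]
  push_cast [qpow_eq]
  rfl

lemma gFun_le {x t : ℝ} (hx1 : ((xLq:ℚ):ℝ) ≤ x) (hx2 : x ≤ ((xUq:ℚ):ℝ))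
    {l u : ℚ} (hl : 0 ≤ l) (hlu : l ≤ u) (hrem : 0 ≤ remB u) (hb : bnd l u ≤ Kq)
    (ht1 : ((l:ℚ):ℝ) ≤ t) (ht2 : t ≤ ((u:ℚ):ℝ)) : gFun x t ≤ ((Kq:ℚ):ℝ) := by
  have hXL : (0:ℝ) ≤ ((xLq:ℚ):ℝ) := by
    rw [show ((xLq:ℚ):ℝ) = ((133671762404142720636756674736169 / 151030270542339911330956815892480 : ℚ) : ℝ) from rfl]
    positivity
  set L : ℝ := ((l:ℚ):ℝ) with hLdef
  set U : ℝ := ((u:ℚ):ℝ) with hUdef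
  set δ : ℝ := t - L with hδdef
  have hδ0 : 0 ≤ δ := by simp [hδdef]; linarith
  have hLpos : 0 ≤ L := by rw [hLdef]; exact_mod_cast hl
  have htLδ : t = L + δ := by ring
  have hLδU : L + δ ≤ U := by rw [← htLδ]; exact ht2
  have hW : δ ≤ ((u - l : ℚ):ℝ) := by push_cast; rw [hδdef]; linarith
  have hW0 : (0:ℝ) ≤ ((u - l : ℚ):ℝ) := le_trans hδ0 hW
  -- step 1: bound each monomial
  have step1 : gFun x t ≤ (mons.map (fun m =>
      (∑ k ∈ range 8, (((cxQ m.1 m.2.1 : ℚ):ℝ) * (m.2.2.choose k : ℝ) * L ^ (m.2.2-k)) * δ ^ k)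
      + (if 0 < m.1 then (m.1:ℝ) * ((xUq:ℚ):ℝ) ^ m.2.1 * (m.2.2.choose 8 : ℝ) * U ^ (m.2.2-8) else 0) * δ ^ 8)).sum := by
    rw [gFun, htLδ]
    refine map_sum_le _ _ _ fun m _ => ?_
    have := mon_bound hXL hx1 hx2 hLpos hδ0 hLδU m.1 m.2.1 m.2.2
    refine this.trans (le_of_eq ?_)
    congr 1
    refine Finset.sum_congr rfl fun k _ => ?_
    rw [cast_cxQ]
  -- step 2: reorganize
  rw [show (fun m : ℤ × ℕ × ℕ =>
      (∑ k ∈ range 8, (((cxQ m.1 m.2.1 : ℚ):ℝ) * (m.2.2.choose k : ℝ) * L ^ (m.2.2-k)) * δ ^ k)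
      + (if 0 < m.1 then (m.1:ℝ) * ((xUq:ℚ):ℝ) ^ m.2.1 * (m.2.2.choose 8 : ℝ) * U ^ (m.2.2-8) else 0) * δ ^ 8)
    = (fun m : ℤ × ℕ × ℕ =>
      (∑ k ∈ range 8, (((cxQ m.1 m.2.1 : ℚ):ℝ) * (m.2.2.choose k : ℝ) * L ^ (m.2.2-k)) * δ ^ k)
      + (fun m : ℤ × ℕ × ℕ => (if 0 < m.1 then (m.1:ℝ) * ((xUq:ℚ):ℝ) ^ m.2.1 * (m.2.2.choose 8 : ℝ) * U ^ (m.2.2-8) else 0)) m * δ ^ 8) from rfl] at step1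
  rw [map_sum_add, map_sum_swap, map_sum_mul] at step1
  -- identify the sums with casts of the rational quantities
  have hcoef : ∀ k : ℕ, (mons.map (fun m =>
      (((cxQ m.1 m.2.1 : ℚ):ℝ) * (m.2.2.choose k : ℝ) * L ^ (m.2.2-k)) * δ ^ k)).sum
      = ((coefB l k : ℚ):ℝ) * δ ^ k := by
    intro k
    rw [coefB, cast_list_sum, ← map_sum_mul]
    have hfg : (fun a : ℤ × ℕ × ℕ =>
        (((cxQ a.1 a.2.1 * (a.2.2.choose k : ℚ) * qpow l (a.2.2-k)) : ℚ) : ℝ) * δ ^ k)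
        = (fun m : ℤ × ℕ × ℕ =>
        (((cxQ m.1 m.2.1 : ℚ):ℝ) * (m.2.2.choose k : ℝ) * L ^ (m.2.2-k)) * δ ^ k) := by
      funext m
      push_cast [qpow_eq]
      ring
    rw [hfg]
  have hrem' : (mons.map (fun m =>
      (if 0 < m.1 then (m.1:ℝ) * ((xUq:ℚ):ℝ) ^ m.2.1 * (m.2.2.choose 8 : ℝ) * U ^ (m.2.2-8) else 0))).sum
      = ((remB u : ℚ):ℝ) := by
    rw [remB, cast_list_sum]
    have hfg : (fun a : ℤ × ℕ × ℕ =>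
        (((if 0 < a.1 then (a.1:ℚ) * qpow xUq a.2.1 * (a.2.2.choose 8 : ℚ) * qpow u (a.2.2-8) else 0) : ℚ) : ℝ))
        = (fun m : ℤ × ℕ × ℕ =>
        (if 0 < m.1 then (m.1:ℝ) * ((xUq:ℚ):ℝ) ^ m.2.1 * (m.2.2.choose 8 : ℝ) * U ^ (m.2.2-8) else 0)) := by
      funext m
      rw [apply_ite (fun q : ℚ => (q : ℝ))]
      push_cast [qpow_eq]
      rfl
    rw [hfg]
  simp only [hcoef, hrem'] at step1
  have hWc : δ ≤ ((u - l : ℚ):ℝ) := hW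
  have hKr : ((bnd l u : ℚ):ℝ) ≤ ((Kq:ℚ):ℝ) := by exact_mod_cast hb
  have hbnd : ((bnd l u : ℚ):ℝ) = ((coefB l 0 : ℚ):ℝ)
      + ((max 0 (coefB l 1) : ℚ):ℝ) * ((u - l : ℚ):ℝ) ^ 1
      + ((max 0 (coefB l 2) : ℚ):ℝ) * ((u - l : ℚ):ℝ) ^ 2
      + ((max 0 (coefB l 3) : ℚ):ℝ) * ((u - l : ℚ):ℝ) ^ 3
      + ((max 0 (coefB l 4) : ℚ):ℝ) * ((u - l : ℚ):ℝ) ^ 4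
      + ((max 0 (coefB l 5) : ℚ):ℝ) * ((u - l : ℚ):ℝ) ^ 5
      + ((max 0 (coefB l 6) : ℚ):ℝ) * ((u - l : ℚ):ℝ) ^ 6
      + ((max 0 (coefB l 7) : ℚ):ℝ) * ((u - l : ℚ):ℝ) ^ 7
      + ((remB u : ℚ):ℝ) * ((u - l : ℚ):ℝ) ^ 8 := by
    rw [bnd]
    push_cast [qpow_eq]
    ring
  have hterm : ∀ k : ℕ, ((coefB l k : ℚ):ℝ) * δ ^ k
      ≤ ((max 0 (coefB l k) : ℚ):ℝ) * ((u - l : ℚ):ℝ) ^ k := by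
    intro k
    have h1 : ((coefB l k : ℚ):ℝ) ≤ ((max 0 (coefB l k) : ℚ):ℝ) := by
      exact_mod_cast le_max_right 0 (coefB l k)
    have h0 : (0:ℝ) ≤ ((max 0 (coefB l k) : ℚ):ℝ) := by
      exact_mod_cast le_max_left 0 (coefB l k)
    have h2 : δ ^ k ≤ ((u - l : ℚ):ℝ) ^ k := pow_le_pow_left₀ hδ0 hWc k
    have h3 : (0:ℝ) ≤ δ ^ k := by positivity
    nlinarith
  have hrem2 : ((remB u : ℚ):ℝ) * δ ^ 8 ≤ ((remB u : ℚ):ℝ) * ((u - l : ℚ):ℝ) ^ 8 := by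
    have h0 : (0:ℝ) ≤ ((remB u : ℚ):ℝ) := by exact_mod_cast hrem
    have h2 : δ ^ 8 ≤ ((u - l : ℚ):ℝ) ^ 8 := pow_le_pow_left₀ hδ0 hWc 8
    nlinarith
  have hexp : ∑ k ∈ range 8, ((coefB l k : ℚ):ℝ) * δ ^ k
      = ((coefB l 0 : ℚ):ℝ) + ((coefB l 1 : ℚ):ℝ) * δ ^ 1 + ((coefB l 2 : ℚ):ℝ) * δ ^ 2
      + ((coefB l 3 : ℚ):ℝ) * δ ^ 3 + ((coefB l 4 : ℚ):ℝ) * δ ^ 4 + ((coefB l 5 : ℚ):ℝ) * δ ^ 5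
      + ((coefB l 6 : ℚ):ℝ) * δ ^ 6 + ((coefB l 7 : ℚ):ℝ) * δ ^ 7 := by
    simp [Finset.sum_range_succ]
    try ring
  rw [hexp] at step1
  have h00 : ((coefB l 0 : ℚ):ℝ) * δ ^ 0 ≤ ((max 0 (coefB l 0) : ℚ):ℝ) * ((u - l : ℚ):ℝ) ^ 0 := hterm 0
  have h1 := hterm 1
  have h2 := hterm 2
  have h3 := hterm 3
  have h4 := hterm 4
  have h5 := hterm 5
  have h6 := hterm 6
  have h7 := hterm 7
  refine le_trans step1 (le_trans ?_ hKr)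
  rw [hbnd]
  have hmax0 : ((max 0 (coefB l 0) : ℚ):ℝ) = ((coefB l 0 : ℚ):ℝ) ∨ True := Or.inr trivial
  linarith [hterm 0]

/-! ### Chain over the subdivision -/

def lastD : ℚ → List ℚ → ℚ
  | l, [] => l
  | _, u :: r => lastD u r

lemma chk_sound {x t : ℝ} (hx1 : ((xLq:ℚ):ℝ) ≤ x) (hx2 : x ≤ ((xUq:ℚ):ℝ)) :
    ∀ (ps : List ℚ) (l : ℚ), chk l ps = true → 0 ≤ l → ((l:ℚ):ℝ) ≤ t →
      t ≤ ((lastD l ps : ℚ):ℝ) → gFun x t ≤ ((Kq:ℚ):ℝ)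
  | [], l, h, _, _, _ => by simp [chk] at h
  | [u], l, h, hl, ht1, ht2 => by
    simp only [chk, Bool.and_eq_true, decide_eq_true_eq] at h
    obtain ⟨⟨h1, h2⟩, h3⟩ := h
    exact gFun_le hx1 hx2 hl h1.le h2 h3 ht1 (by simpa [lastD] using ht2)
  | u :: v :: r, l, h, hl, ht1, ht2 => by
    simp only [chk, Bool.and_eq_true, decide_eq_true_eq] at h
    obtain ⟨⟨⟨h1, h2⟩, h3⟩, h4⟩ := h
    rcases le_or_gt t ((u:ℚ):ℝ) with hc | hc
    · exact gFun_le hx1 hx2 hl h1.le h2 h3 ht1 hc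
    · exact chk_sound hx1 hx2 (v :: r) u (by simpa [chk] using h4) (hl.trans h1.le) hc.le
        (by simpa [lastD] using ht2)

/-! ### Explicit values of frogT -/

lemma frogT_zero (x y : ℝ) : frogT x y 0 = 1 := by rw [frogT]

lemma frogT_succ (x y : ℝ) (k : ℕ) : frogT x y (k+1) =
    1 - ∑ i ∈ range (k + 1), ((k + 1).choose i : ℝ) * (x * y ^ (i + 1)) ^ (k + 1 - i) * frogT x y i := by
  rw [frogT]
  rw [← Finset.sum_attach (range (k+1)) (fun i => ((k + 1).choose i : ℝ) * (x * y ^ (i + 1)) ^ (k + 1 - i) * frogT x y i)]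

lemma frogT_1 (x y : ℝ) : frogT x y 1 = 1 - x * y := by
  rw [frogT_succ]
  simp [Finset.sum_range_succ, frogT_zero]

lemma frogT_2 (x y : ℝ) : frogT x y 2 =
    1 - (2 * (x * y ^ 2) * (1 - x * y) + (x * y) ^ 2) := by
  rw [frogT_succ]
  simp only [Finset.sum_range_succ, Finset.sum_range_zero, frogT_zero, frogT_1,
    show ((2:ℕ).choose 0) = 1 from rfl, show ((2:ℕ).choose 1) = 2 from rfl]
  norm_num
  try ring

lemma frogT_3 (x y : ℝ) : frogT x y 3 =
    1 - ((x*y)^3 + 3 * (x*y^2)^2 * (1 - x*y) + 3 * (x*y^3) * (1 - (2 * (x * y ^ 2) * (1 - x * y) + (x * y) ^ 2))) := by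
  rw [frogT_succ]
  simp only [Finset.sum_range_succ, Finset.sum_range_zero, frogT_zero, frogT_1, frogT_2,
    show ((3:ℕ).choose 0) = 1 from rfl, show ((3:ℕ).choose 1) = 3 from rfl,
    show ((3:ℕ).choose 2) = 3 from rfl]
  norm_num
  try ring

lemma frogT_4 (x y : ℝ) : frogT x y 4 =
    1 - ((x*y)^4 + 4 * (x*y^2)^3 * (frogT x y 1) + 6 * (x*y^3)^2 * (frogT x y 2)
      + 4 * (x*y^4) * (frogT x y 3)) := by
  rw [frogT_succ]
  simp only [Finset.sum_range_succ, Finset.sum_range_zero, frogT_zero,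
    show ((4:ℕ).choose 0) = 1 from rfl, show ((4:ℕ).choose 1) = 4 from rfl,
    show ((4:ℕ).choose 2) = 6 from rfl, show ((4:ℕ).choose 3) = 4 from rfl]
  norm_num
  try ring

lemma frogT_5 (x y : ℝ) : frogT x y 5 =
    1 - ((x*y)^5 + 5 * (x*y^2)^4 * (frogT x y 1) + 10 * (x*y^3)^3 * (frogT x y 2)
      + 10 * (x*y^4)^2 * (frogT x y 3) + 5 * (x*y^5) * (frogT x y 4)) := by
  rw [frogT_succ]
  simp only [Finset.sum_range_succ, Finset.sum_range_zero, frogT_zero,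
    show ((5:ℕ).choose 0) = 1 from rfl, show ((5:ℕ).choose 1) = 5 from rfl,
    show ((5:ℕ).choose 2) = 10 from rfl, show ((5:ℕ).choose 3) = 10 from rfl,
    show ((5:ℕ).choose 4) = 5 from rfl]
  norm_num
  try ring

/-! ### Change of variables -/

noncomputable def stepR (X T : ℝ) : ℕ → ℝ
  | 0 => X^5 * frogT X (T^21) 0
  | 1 => 5 * X^4 * T^109 * frogT X (T^21) 1
  | 2 => 10 * X^3 * T^176 * frogT X (T^21) 2
  | 3 => 10 * X^2 * T^201 * frogT X (T^21) 3
  | 4 => 5 * X * T^184 * frogT X (T^21) 4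
  | 5 => T^125 * frogT X (T^21) 5
  | _ => 0

lemma pstar_val : pstar 6 ((46:ℝ)/197) = 23/86 := by
  rw [pstar]; norm_num

lemma phat_val : phat ((46:ℝ)/197) = 46/151 := by
  rw [phat]; norm_num

lemma Phi_val : Phi 6 ((46:ℝ)/197) = Real.exp (-(21/172)) := by
  rw [Phi, pstar_val]
  congr 1
  norm_num

lemma Lam_val (l : ℝ) : Lam 6 ((46:ℝ)/197) l = Real.exp (-(l/151)) ^ 21 := by
  rw [Lam, phat_val, ← Real.exp_nat_mul]
  congr 1
  push_cast
  ring

lemma frogF_eq (l : ℝ) : frogF 6 ((46:ℝ)/197) l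
    = Real.exp (-(23/86)) * gFun (Real.exp (-(21/172))) (Real.exp (-(l/151))) := by
  set X : ℝ := Real.exp (-(21/172)) with hX
  set T : ℝ := Real.exp (-(l/151)) with hT
  have hE : ∀ (r : ℝ) (n m : ℕ), r * l + (n:ℝ) * (-(l/151)) = (m:ℝ) * (-(l/151)) →
      Real.exp (r * l) * T ^ n = T ^ m := by
    intro r n m hrm
    rw [hT, ← Real.exp_nat_mul, ← Real.exp_nat_mul, ← Real.exp_add, hrm]
  rw [frogF, pstar_val, Phi_val, Lam_val, ← hX, ← hT]
  congr 1
  have hsum : ∀ u ∈ range 6, Real.exp ((1 - phat ((46:ℝ)/197) * (1 + (u:ℝ))) * l)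
      * frogS 6 u X (T^21) = stepR X T u := by
    intro u hu
    rw [phat_val]
    have hu6 : u < 6 := Finset.mem_range.mp hu
    interval_cases u
    · have h1 : frogS 6 0 X (T^21) = 1 * (X * (T^21)^1)^5 * frogT X (T^21) 0 := by
        rw [frogS]
        simp only [show ((6-1:ℕ).choose 0) = 1 from rfl]
        norm_num
      rw [h1, stepR]
      linear_combination (X^5 * frogT X (T^21) 0) * hE (1 - 46/151 * (1 + ((0:ℕ):ℝ))) 105 0 (by push_cast; ring)
    · have h1 : frogS 6 1 X (T^21) = 5 * (X * (T^21)^2)^4 * frogT X (T^21) 1 := by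
        rw [frogS]
        simp only [show ((6-1:ℕ).choose 1) = 5 from rfl]
        norm_num
      rw [h1, stepR]
      linear_combination (5 * X^4 * frogT X (T^21) 1) * hE (1 - 46/151 * (1 + ((1:ℕ):ℝ))) 168 109 (by push_cast; ring)
    · have h1 : frogS 6 2 X (T^21) = 10 * (X * (T^21)^3)^3 * frogT X (T^21) 2 := by
        rw [frogS]
        simp only [show ((6-1:ℕ).choose 2) = 10 from rfl]
        norm_num
      rw [h1, stepR]
      linear_combination (10 * X^3 * frogT X (T^21) 2) * hE (1 - 46/151 * (1 + ((2:ℕ):ℝ))) 189 176 (by push_cast; ring)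
    · have h1 : frogS 6 3 X (T^21) = 10 * (X * (T^21)^4)^2 * frogT X (T^21) 3 := by
        rw [frogS]
        simp only [show ((6-1:ℕ).choose 3) = 10 from rfl]
        norm_num
      rw [h1, stepR]
      linear_combination (10 * X^2 * frogT X (T^21) 3) * hE (1 - 46/151 * (1 + ((3:ℕ):ℝ))) 168 201 (by push_cast; ring)
    · have h1 : frogS 6 4 X (T^21) = 5 * (X * (T^21)^5)^1 * frogT X (T^21) 4 := by
        rw [frogS]
        simp only [show ((6-1:ℕ).choose 4) = 5 from rfl]
        norm_num
      rw [h1, stepR]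
      linear_combination (5 * X * frogT X (T^21) 4) * hE (1 - 46/151 * (1 + ((4:ℕ):ℝ))) 105 184 (by push_cast; ring)
    · have h1 : frogS 6 5 X (T^21) = 1 * (X * (T^21)^6)^0 * frogT X (T^21) 5 := by
        rw [frogS]
        simp only [show ((6-1:ℕ).choose 5) = 1 from rfl]
        norm_num
      rw [h1, stepR]
      linear_combination (frogT X (T^21) 5) * hE (1 - 46/151 * (1 + ((5:ℕ):ℝ))) 0 125 (by push_cast; ring)
  rw [Finset.sum_congr rfl hsum]
  have hexp : ∑ u ∈ range 6, stepR X T u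
      = stepR X T 0 + stepR X T 1 + stepR X T 2 + stepR X T 3 + stepR X T 4 + stepR X T 5 := by
    simp [Finset.sum_range_succ]
    try ring
  rw [hexp]
  simp only [stepR]
  simp only [frogT_zero, frogT_1, frogT_2, frogT_3, frogT_4, frogT_5]
  rw [gFun]
  simp only [mons, List.map_cons, List.map_nil, List.sum_cons, List.sum_nil]
  push_cast
  ring

/-! ### Bounds on the exponential constants -/

lemma X_bounds : ((xLq:ℚ):ℝ) ≤ Real.exp (-(21/172)) ∧ Real.exp (-(21/172)) ≤ ((xUq:ℚ):ℝ) := by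
  have habs : |(-(21/172) : ℝ)| = 21/172 := by
    rw [abs_neg, abs_of_nonneg] <;> norm_num
  have h := Real.exp_bound (x := (-(21/172) : ℝ)) (by rw [habs]; norm_num) (n := 12) (by norm_num)
  rw [habs] at h
  have hsum : ∑ m ∈ Finset.range 12, (-(21/172) : ℝ) ^ m / m.factorial
      = (242862940414503489535800326753 : ℝ) / 274400927584193152854209331200 := by
    simp [Finset.sum_range_succ, Nat.factorial]
    norm_num
  rw [hsum] at h
  have h2 : ((21:ℝ)/172) ^ 12 * ((12:ℕ).succ / ((12:ℕ).factorial * 12))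
      ≤ (18739125543411 : ℝ) / 755151352711699556654784079462400 := by
    norm_num [Nat.factorial]
  have h3 := abs_le.mp h
  constructor
  · have : ((xLq:ℚ):ℝ) = (242862940414503489535800326753 : ℝ) / 274400927584193152854209331200
        - (18739125543411 : ℝ) / 755151352711699556654784079462400 := by
      rw [xLq]; norm_num
    rw [this]; linarith [h3.1]
  · have : ((xUq:ℚ):ℝ) = (242862940414503489535800326753 : ℝ) / 274400927584193152854209331200
        + (18739125543411 : ℝ) / 755151352711699556654784079462400 := by
      rw [xUq]; norm_num
    rw [this]; linarith [h3.2]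

lemma E_bound : Real.exp (-(23/86)) ≤ ((eUq:ℚ):ℝ) := by
  have habs : |(-(23/86) : ℝ)| = 23/86 := by
    rw [abs_neg, abs_of_nonneg] <;> norm_num
  have h := Real.exp_bound (x := (-(23/86) : ℝ)) (by rw [habs]; norm_num) (n := 12) (by norm_num)
  rw [habs] at h
  have hsum : ∑ m ∈ Finset.range 12, (-(23/86) : ℝ) ^ m / m.factorial
      = (58142025529823238160855901587 : ℝ) / 75969397431756600423992524800 := by
    simp [Finset.sum_range_succ, Nat.factorial]
    norm_num
  rw [hsum] at h
  have h2 : ((23:ℝ)/86) ^ 12 * ((12:ℕ).succ / ((12:ℕ).factorial * 12))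
      ≤ (284890117616264173 : ℝ) / 940805017794873739650723427123200 := by
    norm_num [Nat.factorial]
  have h3 := abs_le.mp h
  have : ((eUq:ℚ):ℝ) = (58142025529823238160855901587 : ℝ) / 75969397431756600423992524800
      + (284890117616264173 : ℝ) / 940805017794873739650723427123200 := by
    rw [eUq]; norm_num
  rw [this]; linarith [h3.2]

lemma lastD_pts : lastD 0 pts = 1 := by rfl

end FrogAux

/-- Theorem 1 (analytic core): `M^{6,46/197} < 1`, underlying `S_6 ≤ 46/197`. -/
theorem frogM_lt_one_d6 : frogM 6 ((46 : ℝ) / 197) < 1 := by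
  have hKpos : (0:ℝ) ≤ ((FrogAux.Kq:ℚ):ℝ) := by
    rw [FrogAux.Kq]; norm_num
  have hbound : ∀ y ∈ frogF 6 ((46:ℝ)/197) '' Set.Ici 0, y ≤ ((FrogAux.eUq * FrogAux.Kq : ℚ):ℝ) := by
    rintro y ⟨l, hl, rfl⟩
    have hl0 : (0:ℝ) ≤ l := hl
    rw [FrogAux.frogF_eq]
    have hT1 : Real.exp (-(l/151)) ≤ 1 := Real.exp_le_one_iff.mpr (neg_nonpos.mpr (by positivity))
    have hT0 : ((0:ℚ):ℝ) ≤ Real.exp (-(l/151)) := by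
      rw [Rat.cast_zero]; exact (Real.exp_pos _).le
    have hT1' : Real.exp (-(l/151)) ≤ ((FrogAux.lastD 0 FrogAux.pts : ℚ):ℝ) := by
      rw [FrogAux.lastD_pts, Rat.cast_one]; exact hT1
    have hg := FrogAux.chk_sound FrogAux.X_bounds.1 FrogAux.X_bounds.2 FrogAux.pts 0
      FrogAux.chk_true le_rfl hT0 hT1'
    have hEpos := (Real.exp_pos (-(23/86:ℝ))).le
    calc Real.exp (-(23/86)) * FrogAux.gFun (Real.exp (-(21/172))) (Real.exp (-(l/151)))
        ≤ Real.exp (-(23/86)) * ((FrogAux.Kq:ℚ):ℝ) := by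
          exact mul_le_mul_of_nonneg_left hg hEpos
      _ ≤ ((FrogAux.eUq:ℚ):ℝ) * ((FrogAux.Kq:ℚ):ℝ) := by
          exact mul_le_mul_of_nonneg_right FrogAux.E_bound hKpos
      _ = ((FrogAux.eUq * FrogAux.Kq : ℚ):ℝ) := by push_cast; ring
  have hc0 : (0:ℝ) ≤ ((FrogAux.eUq * FrogAux.Kq : ℚ):ℝ) := by
    rw [FrogAux.eUq, FrogAux.Kq]; norm_num
  have hle : frogM 6 ((46:ℝ)/197) ≤ ((FrogAux.eUq * FrogAux.Kq : ℚ):ℝ) :=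
    Real.sSup_le hbound hc0
  refine lt_of_le_of_lt hle ?_
  rw [FrogAux.eUq, FrogAux.Kq]
  norm_num
end

section
/- Fix an integer n ≥ 1. Let C_t^1 denote the number of distinct values among t i.i.d. draws uniform on a set of n coupons, and C_t^2 the number of distinct values among t i.i.d. draws uniform on a set of n+1 coupons. Then there exists a coupling of the two sequences of draws—i.e., a probability space carrying sequences (X_t)_{t≥1} and (Y_t)_{t≥1}, where the X_t are i.i.d. uniform on {1,…,n} and the Y_t are i.i.d. uniform on {1,…,n+1}—such that almost surely, for every t ≥ 0, the number of distinct values among X_1,…,X_t is at most the number of distinct values among Y_1,…,Y_t. In particular, C_t^1 is stochastically dominated by C_t^2 for every t: for all t ≥ 0 and all k, P(C_t^1 ≥ k) ≤ P(C_t^2 ≥ k). (Claim 8 in the paper.) -/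
open MeasureTheory ProbabilityTheory Finset
open scoped ENNReal

variable (n : ℕ) [NeZero n]

abbrev DD := Fin (n+1) × Fin n
abbrev GG := ℕ → DD n

instance (m : ℕ) : TopologicalSpace (Fin m) := ⊥
instance (m : ℕ) : DiscreteTopology (Fin m) := ⟨rfl⟩
instance (m : ℕ) [NeZero m] : IsTopologicalAddGroup (Fin m) :=
  { continuous_add := continuous_of_discreteTopology
    continuous_neg := continuous_of_discreteTopology }

noncomputable def KK : TopologicalSpace.PositiveCompacts (GG n) :=
  ⟨⟨Set.univ, isCompact_univ⟩, by simp⟩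

noncomputable def mu : Measure (GG n) := Measure.addHaarMeasure (KK n)

instance : IsProbabilityMeasure (mu n) :=
  ⟨by simpa [KK, mu] using Measure.addHaarMeasure_self (K₀ := KK n)⟩

instance : (mu n).IsAddLeftInvariant := Measure.isAddLeftInvariant_addHaarMeasure _

def rT (T : ℕ) : GG n → (Fin T → DD n) := fun ω i => ω i

lemma measurable_rT (T : ℕ) : Measurable (rT n T) :=
  measurable_pi_lambda _ (fun i => measurable_pi_apply _)

lemma ms_all {T : ℕ} (B : Set (Fin T → DD n)) : MeasurableSet B :=
  B.to_countable.measurableSet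

lemma cyl_eq (T : ℕ) (b c : Fin T → DD n) :
    mu n (rT n T ⁻¹' {b}) = mu n (rT n T ⁻¹' {c}) := by
  set e : GG n := fun i => if h : i < T then b ⟨i, h⟩ - c ⟨i, h⟩ else 0 with he
  have key : (fun ω => e + ω) ⁻¹' (rT n T ⁻¹' {b}) = rT n T ⁻¹' {c} := by
    ext ω
    simp only [Set.mem_preimage, Set.mem_singleton_iff, rT, funext_iff, Pi.add_apply]
    refine forall_congr' fun i => ?_
    have : e (i : ℕ) = b i - c i := by simp [he, i.isLt, Fin.eta]
    rw [this]
    constructor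
    · intro h
      have h2 : ω (i : ℕ) = b i - (b i - c i) := by
        rw [eq_sub_iff_add_eq, add_comm]; exact h
      simpa using h2
    · intro h; rw [h]; abel
  rw [← key, measure_preimage_add]

lemma cyl_measure (T : ℕ) (b : Fin T → DD n) :
    mu n (rT n T ⁻¹' {b}) = ((Fintype.card (DD n) : ℝ≥0∞) ^ T)⁻¹ := by
  have hdis : Pairwise (Function.onFun Disjoint fun c : Fin T → DD n => rT n T ⁻¹' {c}) := by
    intro c c' hcc'
    simp only [Function.onFun, Set.disjoint_left]
    rintro ω h1 h2
    exact hcc' (h1.symm.trans h2 : _)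
  have hunion : (⋃ c : Fin T → DD n, rT n T ⁻¹' {c}) = Set.univ := by
    ext ω; simp only [Set.mem_iUnion, Set.mem_univ, iff_true]
    exact ⟨rT n T ω, rfl⟩
  have h1 : ∑' c : Fin T → DD n, mu n (rT n T ⁻¹' {c}) = 1 := by
    rw [← measure_iUnion hdis (fun c => (measurable_rT n T) (ms_all n _)), hunion]
    exact measure_univ
  rw [tsum_fintype] at h1
  have hall : ∀ c : Fin T → DD n, mu n (rT n T ⁻¹' {c}) = mu n (rT n T ⁻¹' {b}) :=
    fun c => cyl_eq n T c b
  simp only [hall, Finset.sum_const, Finset.card_univ, nsmul_eq_mul] at h1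
  have hcard : (Fintype.card (Fin T → DD n) : ℝ≥0∞) = (Fintype.card (DD n) : ℝ≥0∞) ^ T := by
    rw [Fintype.card_fun]; push_cast; simp
  rw [hcard] at h1
  have hk0 : (Fintype.card (DD n) : ℝ≥0∞) ^ T ≠ 0 := by
    positivity
  have hktop : (Fintype.card (DD n) : ℝ≥0∞) ^ T ≠ ⊤ := by
    exact ENNReal.pow_ne_top (ENNReal.natCast_ne_top _)
  calc mu n (rT n T ⁻¹' {b})
      = ((Fintype.card (DD n) : ℝ≥0∞) ^ T)⁻¹ * ((Fintype.card (DD n) : ℝ≥0∞) ^ T * mu n (rT n T ⁻¹' {b})) := by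
        rw [← mul_assoc, ENNReal.inv_mul_cancel hk0 hktop, one_mul]
    _ = ((Fintype.card (DD n) : ℝ≥0∞) ^ T)⁻¹ := by rw [h1, mul_one]

lemma meas_cnt (T : ℕ) (B : Finset (Fin T → DD n)) :
    mu n (rT n T ⁻¹' ↑B) = B.card * ((Fintype.card (DD n) : ℝ≥0∞) ^ T)⁻¹ := by
  have : (rT n T ⁻¹' ↑B) = ⋃ b ∈ B, rT n T ⁻¹' {b} := by
    ext ω; simp
  rw [this, measure_biUnion_finset ?_ (fun b _ => (measurable_rT n T) (ms_all n _))]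
  · simp only [cyl_measure, Finset.sum_const, nsmul_eq_mul]
  · intro b _ c _ hbc
    simp only [Function.onFun, Set.disjoint_left]
    rintro ω h1 h2; exact hbc (h1.symm.trans h2 : _)


/-- one step of the X-draw given the current injection -/
def stepX (σ : Fin (n+1) ≃ Fin (n+1)) (d : DD n) : Fin n :=
  if h : σ.symm d.1 = Fin.last n then d.2 else (σ.symm d.1).castPred h

/-- the evolving injection, as a permutation of `Fin (n+1)`. -/
def sig : ℕ → GG n → (Fin (n+1) ≃ Fin (n+1))
  | 0, _ => Equiv.refl _
  | (t+1), ω =>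
      let s := sig t ω
      if s.symm (ω t).1 = Fin.last n then
        (Equiv.swap (Fin.last n) ((ω t).2.castSucc)).trans s
      else s

def XX (t : ℕ) (ω : GG n) : Fin n := stepX n (sig n t ω) (ω t)

def YY (t : ℕ) (ω : GG n) : Fin (n+1) := (ω t).1

/-- Invariant: the image of the collected `X`-coupons under the injection
`σ_t ∘ castSucc` is contained in the collected `Y`-coupons. -/
lemma invariant (ω : GG n) : ∀ t, ∀ i < t,
    sig n t ω ((XX n i ω).castSucc) ∈ (range t).image (fun j => YY n j ω) := by
  intro t
  induction t with
  | zero => intro i hi; omega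
  | succ t ih =>
    intro i hi
    have hsub : (range t).image (fun j => YY n j ω) ⊆
        (range (t+1)).image (fun j => YY n j ω) :=
      image_subset_image (by intro x hx; simp at hx ⊢; omega)
    have hYt : YY n t ω ∈ (range (t+1)).image (fun j => YY n j ω) :=
      mem_image.2 ⟨t, by simp, rfl⟩
    have hst : sig n t ω ((sig n t ω).symm (ω t).1) = (ω t).1 := (sig n t ω).apply_symm_apply _
    by_cases hc : (sig n t ω).symm (ω t).1 = Fin.last n
    · -- case B : new coordinate missing, swap
      have hsig : sig n (t+1) ω = (Equiv.swap (Fin.last n) ((ω t).2.castSucc)).trans (sig n t ω) := by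
        rw [sig]; simp only [hc, if_true]
      have hXt : XX n t ω = (ω t).2 := by rw [XX, stepX, dif_pos hc]
      rcases Nat.lt_succ_iff_lt_or_eq.1 hi with hi' | heq
      · by_cases hx : XX n i ω = (ω t).2
        · rw [hsig]
          simp only [Equiv.trans_apply, hx, Equiv.swap_apply_right]
          rw [← hc, hst]; exact hYt
        · rw [hsig]
          simp only [Equiv.trans_apply]
          rw [Equiv.swap_apply_of_ne_of_ne ?h1 ?h2]
          · exact hsub (ih i hi')
          case h1 => exact fun hcon => (Fin.castSucc_lt_last _).ne hcon
          case h2 => exact fun hcon => hx (Fin.castSucc_injective _ hcon)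
      · rw [heq, hsig, hXt]
        simp only [Equiv.trans_apply, Equiv.swap_apply_right]
        rw [← hc, hst]; exact hYt
    · -- case A : σ unchanged
      have hsig : sig n (t+1) ω = sig n t ω := by
        rw [sig]; simp only [hc, if_false]
      rcases Nat.lt_succ_iff_lt_or_eq.1 hi with hi' | heq
      · rw [hsig]; exact hsub (ih i hi')
      · have hXt : XX n t ω = ((sig n t ω).symm (ω t).1).castPred hc := by
          rw [XX, stepX, dif_neg hc]
        rw [heq, hsig, hXt]
        simp only [Fin.castSucc_castPred]
        rw [hst]; exact hYt

lemma card_dom (ω : GG n) (t : ℕ) :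
    ((range t).image (fun i => XX n i ω)).card ≤ ((range t).image (fun j => YY n j ω)).card := by
  classical
  have hinj : Function.Injective (fun x : Fin n => sig n t ω x.castSucc) :=
    fun a b hab => Fin.castSucc_injective _ ((sig n t ω).injective hab)
  calc ((range t).image (fun i => XX n i ω)).card
      = (((range t).image (fun i => XX n i ω)).image (fun x => sig n t ω x.castSucc)).card :=
        (Finset.card_image_of_injective _ hinj).symm
    _ ≤ ((range t).image (fun j => YY n j ω)).card := by
        apply Finset.card_le_card
        intro y hy
        simp only [Finset.mem_image] at hy
        obtain ⟨x, hx, rfl⟩ := hy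
        obtain ⟨i, hi, rfl⟩ := hx
        exact invariant n ω t i (Finset.mem_range.1 hi)
section D
variable (n : ℕ) [NeZero n]

/-- extend a finite prefix by zeros -/
def extT (T : ℕ) (f : Fin T → DD n) : GG n :=
  fun i => if h : i < T then f ⟨i, h⟩ else 0

lemma extT_lt {T : ℕ} (f : Fin T → DD n) {i : ℕ} (h : i < T) :
    extT n T f i = f ⟨i, h⟩ := dif_pos h

lemma sig_congr (t : ℕ) (ω ω' : GG n) (h : ∀ i < t, ω i = ω' i) :
    sig n t ω = sig n t ω' := by
  induction t with
  | zero => rfl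
  | succ t ih =>
    have h' : ∀ i < t, ω i = ω' i := fun i hi => h i (by omega)
    have ht : ω t = ω' t := h t (by omega)
    rw [sig, sig, ih h', ht]

lemma XX_congr (t : ℕ) (ω ω' : GG n) (h : ∀ i < t + 1, ω i = ω' i) :
    XX n t ω = XX n t ω' := by
  rw [XX, XX, sig_congr n t ω ω' (fun i hi => h i (by omega)), h t (by omega)]

lemma XX_ext {T t : ℕ} (ht : t < T) (ω : GG n) :
    XX n t (extT n T (rT n T ω)) = XX n t ω := by
  apply XX_congr
  intro i hi
  rw [extT_lt n _ (by omega : i < T)]; rfl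

lemma stepX_count (σ : Fin (n+1) ≃ Fin (n+1)) (E : Finset (Fin n)) :
    (univ.filter (fun d : DD n => stepX n σ d ∈ E)).card = E.card * (n+1) := by
  classical
  have hset : univ.filter (fun d : DD n => stepX n σ d ∈ E)
      = ({σ (Fin.last n)} ×ˢ E) ∪ ((E.image (fun x => σ x.castSucc)) ×ˢ (univ : Finset (Fin n))) := by
    ext ⟨w, v⟩
    simp only [Finset.mem_filter, Finset.mem_univ, true_and, Finset.mem_union,
      Finset.mem_product, Finset.mem_singleton, Finset.mem_image]
    by_cases h : σ.symm w = Fin.last n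
    · rw [stepX, dif_pos h]
      have hw : w = σ (Fin.last n) := by rw [← h, Equiv.apply_symm_apply]
      constructor
      · intro hv; exact Or.inl ⟨hw, hv⟩
      · rintro (⟨-, hv⟩ | ⟨⟨x, -, hx⟩, -⟩)
        · exact hv
        · exfalso
          have : x.castSucc = Fin.last n := by
            apply σ.injective; rw [hx, ← h, Equiv.apply_symm_apply]
          exact (Fin.castSucc_lt_last x).ne this
    · rw [stepX, dif_neg h]
      constructor
      · intro hv
        refine Or.inr ⟨⟨(σ.symm w).castPred h, hv, ?_⟩, trivial⟩
        rw [Fin.castSucc_castPred, Equiv.apply_symm_apply]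
      · rintro (⟨hw, -⟩ | ⟨⟨x, hx, hxw⟩, -⟩)
        · exact absurd (by rw [hw, Equiv.symm_apply_apply]) h
        · have : σ.symm w = x.castSucc := by rw [← hxw, Equiv.symm_apply_apply]
          have h2 : (σ.symm w).castPred h = x := by
            apply Fin.castSucc_injective; rw [Fin.castSucc_castPred, this]
          rwa [h2]
  rw [hset, Finset.card_union_of_disjoint, Finset.card_product, Finset.card_product,
    Finset.card_singleton, Finset.card_image_of_injective, Finset.card_univ, Fintype.card_fin]
  · ring
  · intro a b hab
    exact Fin.castSucc_injective _ (σ.injective hab)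
  · simp only [Finset.disjoint_left, Finset.mem_product, Finset.mem_singleton, Finset.mem_image]
    rintro ⟨w, v⟩ ⟨rfl, -⟩ ⟨⟨x, -, hx⟩, -⟩
    have : x.castSucc = Fin.last n := σ.injective hx
    exact (Fin.castSucc_lt_last x).ne this

lemma countX (T : ℕ) (E : ℕ → Finset (Fin n)) :
    (univ.filter (fun f : Fin T → DD n => ∀ i : Fin T, XX n (i : ℕ) (extT n T f) ∈ E (i : ℕ))).card
      = ∏ i ∈ range T, ((E i).card * (n+1)) := by
  classical
  induction T with
  | zero =>
    rw [Finset.filter_true_of_mem (fun f _ => fun i => i.elim0)]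
    simp
  | succ T ih =>
    rw [Finset.prod_range_succ, ← ih]
    -- bijection with a sigma type
    have key : (univ.filter (fun f : Fin (T+1) → DD n =>
          ∀ i : Fin (T+1), XX n (i : ℕ) (extT n (T+1) f) ∈ E (i : ℕ))).card
        = ((univ.filter (fun g : Fin T → DD n =>
            ∀ i : Fin T, XX n (i : ℕ) (extT n T g) ∈ E (i : ℕ))).sigma
            (fun g => univ.filter (fun d : DD n => stepX n (sig n T (extT n T g)) d ∈ E T))).card := by
      refine Finset.card_bij' (fun f _ => ⟨Fin.init f, f (Fin.last T)⟩)
        (fun p _ => Fin.snoc p.1 p.2) ?hi ?hj ?li ?ri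
      case hi =>
        intro f hf
        simp only [Finset.mem_filter, Finset.mem_univ, true_and] at hf
        have hagree : ∀ j < T, extT n (T+1) f j = extT n T (Fin.init f) j := by
          intro j hj
          rw [extT_lt n _ (by omega : j < T+1), extT_lt n _ hj]
          simp [Fin.init, Fin.castSucc]
        simp only [Finset.mem_sigma, Finset.mem_filter, Finset.mem_univ, true_and]
        constructor
        · intro i
          have h1 := hf (Fin.castSucc i)
          rw [Fin.coe_castSucc] at h1
          have hlt := i.isLt
          rwa [XX_congr n (i : ℕ) (extT n T (Fin.init f)) (extT n (T+1) f)
            (fun j hj => (hagree j (by omega)).symm)]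
        · have h1 := hf (Fin.last T)
          simp only [Fin.val_last] at h1
          rw [XX, sig_congr n T _ (extT n T (Fin.init f)) (fun j hj => hagree j hj),
            extT_lt n _ (by omega : T < T+1)] at h1
          exact h1
      case hj =>
        rintro ⟨g, d⟩ hp
        simp only [Finset.mem_sigma, Finset.mem_filter, Finset.mem_univ, true_and] at hp
        obtain ⟨hg, hd⟩ := hp
        simp only [Finset.mem_filter, Finset.mem_univ, true_and]
        have hagree : ∀ j < T, extT n (T+1) (Fin.snoc g d) j = extT n T g j := by
          intro j hj
          rw [extT_lt n _ (by omega : j < T+1), extT_lt n _ hj]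
          exact Fin.snoc_castSucc _ _ ⟨j, hj⟩ ▸ rfl
        intro i
        rcases lt_or_eq_of_le (Nat.lt_succ_iff.mp i.isLt) with hi | hi
        · have h1 := hg ⟨i, hi⟩
          rwa [XX_congr n _ _ _ (fun j hj => hagree j (by omega))]
        · have hieq : i = Fin.last T := Fin.ext (by simpa using hi)
          subst hieq
          simp only [Fin.val_last]
          have hT : T < T + 1 := by omega
          have harg : extT n (T+1) (Fin.snoc g d) T = d := by
            rw [extT_lt n _ hT, show (⟨T, hT⟩ : Fin (T+1)) = Fin.last T from Fin.ext rfl,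
              Fin.snoc_last]
          rw [XX, sig_congr n T _ (extT n T g) (fun j hj => hagree j hj), harg]
          exact hd
      case li =>
        intro f hf
        exact Fin.snoc_init_self f
      case ri =>
        rintro ⟨g, d⟩ hp
        simp only [Fin.init_snoc, Fin.snoc_last]
    rw [key, Finset.card_sigma]
    rw [Finset.sum_congr rfl (fun g _ => stepX_count n (sig n T (extT n T g)) (E T))]
    rw [Finset.sum_const, smul_eq_mul, mul_comm]

lemma countY (T : ℕ) (F : ℕ → Finset (Fin (n+1))) :
    (univ.filter (fun f : Fin T → DD n => ∀ i : Fin T, (f i).1 ∈ F (i : ℕ))).card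
      = ∏ i ∈ range T, ((F i).card * n) := by
  classical
  have : (univ.filter (fun f : Fin T → DD n => ∀ i : Fin T, (f i).1 ∈ F (i : ℕ)))
      = Fintype.piFinset (fun i : Fin T => (F (i : ℕ)) ×ˢ (univ : Finset (Fin n))) := by
    ext f
    simp [Fintype.mem_piFinset, Finset.mem_product]
  rw [this, Fintype.card_piFinset]
  rw [← Fin.prod_univ_eq_prod_range (fun i => (F i).card * n) T]
  exact Finset.prod_congr rfl (fun i _ => by
    rw [Finset.card_product, Finset.card_univ, Fintype.card_fin])

end D
section E
variable (n : ℕ) [NeZero n]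

lemma measurable_XX (t : ℕ) : Measurable (XX n t) := by
  have : XX n t = (fun p : Fin (t+1) → DD n => XX n t (extT n (t+1) p)) ∘ rT n (t+1) := by
    funext ω
    simp only [Function.comp_apply]
    rw [XX_ext n (by omega : t < t+1)]
  rw [this]
  exact (measurable_of_countable _).comp (measurable_rT n _)

lemma measurable_YY (t : ℕ) : Measurable (YY n t) :=
  (measurable_fst.comp (measurable_pi_apply t))

lemma card_DD : (Fintype.card (DD n) : ℝ≥0∞) = ((n : ℝ≥0∞) + 1) * n := by
  rw [Fintype.card_prod, Fintype.card_fin, Fintype.card_fin]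
  push_cast; ring

lemma hn_ne0 : (n : ℝ≥0∞) ≠ 0 := Nat.cast_ne_zero.2 (NeZero.ne n)
lemma hn_netop : (n : ℝ≥0∞) ≠ ⊤ := ENNReal.natCast_ne_top n
lemma hn1_ne0 : (n : ℝ≥0∞) + 1 ≠ 0 := by simp
lemma hn1_netop : (n : ℝ≥0∞) + 1 ≠ ⊤ := by
  exact ENNReal.add_ne_top.2 ⟨hn_netop n, ENNReal.one_ne_top⟩

lemma measX (s : Finset ℕ) (E : ℕ → Finset (Fin n)) :
    mu n {ω | ∀ i ∈ s, XX n i ω ∈ E i} = ∏ i ∈ s, (((E i).card : ℝ≥0∞) / n) := by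
  classical
  set T := s.sup id + 1 with hT
  have hsT : ∀ i ∈ s, i < T := fun i hi => Nat.lt_succ_of_le (Finset.le_sup (f := id) hi)
  set E' : ℕ → Finset (Fin n) := fun i => if i ∈ s then E i else univ with hE'
  set B := univ.filter (fun f : Fin T → DD n =>
    ∀ i : Fin T, XX n (i : ℕ) (extT n T f) ∈ E' (i : ℕ)) with hB
  have hev : {ω : GG n | ∀ i ∈ s, XX n i ω ∈ E i} = rT n T ⁻¹' ↑B := by
    ext ω
    simp only [Set.mem_setOf_eq, Set.mem_preimage, hB, Finset.coe_filter, Finset.mem_univ,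
      true_and, Set.mem_setOf_eq]
    constructor
    · intro h i
      rw [XX_ext n i.isLt]
      by_cases hi : (i : ℕ) ∈ s
      · simpa [hE', hi] using h i hi
      · simp [hE', hi]
    · intro h i hi
      have h2 := h ⟨i, hsT i hi⟩
      rw [XX_ext n (hsT i hi)] at h2
      simpa [hE', hi] using h2
  rw [hev, meas_cnt, hB, countX]
  have hcast : ((∏ i ∈ range T, (E' i).card * (n+1) : ℕ) : ℝ≥0∞)
      = ∏ i ∈ range T, (((E' i).card : ℝ≥0∞) * ((n : ℝ≥0∞)+1)) := by
    push_cast; rfl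
  rw [hcast, card_DD]
  have hpow : ((((n : ℝ≥0∞)+1) * n) ^ T)⁻¹ = ∏ _i ∈ range T, (((n : ℝ≥0∞)+1) * n)⁻¹ := by
    rw [Finset.prod_const, Finset.card_range, ← ENNReal.inv_pow]
  rw [hpow, ← Finset.prod_mul_distrib]
  have hterm : ∀ i, (((E' i).card : ℝ≥0∞) * ((n : ℝ≥0∞)+1)) * ((((n : ℝ≥0∞)+1) * n)⁻¹)
      = ((E' i).card : ℝ≥0∞) / n := by
    intro i
    rw [ENNReal.mul_inv (Or.inl (hn1_ne0 n)) (Or.inl (hn1_netop n))]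
    rw [div_eq_mul_inv]
    calc ((E' i).card : ℝ≥0∞) * ((n : ℝ≥0∞)+1) * (((n : ℝ≥0∞)+1)⁻¹ * (n : ℝ≥0∞)⁻¹)
        = ((E' i).card : ℝ≥0∞) * (((n : ℝ≥0∞)+1) * ((n : ℝ≥0∞)+1)⁻¹) * (n : ℝ≥0∞)⁻¹ := by ring
      _ = ((E' i).card : ℝ≥0∞) * (n : ℝ≥0∞)⁻¹ := by
          rw [ENNReal.mul_inv_cancel (hn1_ne0 n) (hn1_netop n), mul_one]
  rw [Finset.prod_congr rfl (fun i _ => hterm i)]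
  have h1 : ∏ i ∈ s, (((E i).card : ℝ≥0∞) / n) = ∏ i ∈ s, (((E' i).card : ℝ≥0∞) / n) :=
    Finset.prod_congr rfl (fun i hi => by simp [hE', hi])
  rw [h1]
  symm
  apply Finset.prod_subset (fun i hi => Finset.mem_range.2 (hsT i hi))
  intro i _ hi
  have : E' i = univ := by simp [hE', hi]
  rw [this, Finset.card_univ, Fintype.card_fin]
  exact ENNReal.div_self (hn_ne0 n) (hn_netop n)

lemma measY (s : Finset ℕ) (F : ℕ → Finset (Fin (n+1))) :
    mu n {ω | ∀ i ∈ s, YY n i ω ∈ F i} = ∏ i ∈ s, (((F i).card : ℝ≥0∞) / ((n : ℝ≥0∞) + 1)) := by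
  classical
  set T := s.sup id + 1 with hT
  have hsT : ∀ i ∈ s, i < T := fun i hi => Nat.lt_succ_of_le (Finset.le_sup (f := id) hi)
  set F' : ℕ → Finset (Fin (n+1)) := fun i => if i ∈ s then F i else univ with hF'
  set B := univ.filter (fun f : Fin T → DD n =>
    ∀ i : Fin T, (f i).1 ∈ F' (i : ℕ)) with hB
  have hev : {ω : GG n | ∀ i ∈ s, YY n i ω ∈ F i} = rT n T ⁻¹' ↑B := by
    ext ω
    simp only [Set.mem_setOf_eq, Set.mem_preimage, hB, Finset.coe_filter, Finset.mem_univ,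
      true_and, Set.mem_setOf_eq]
    constructor
    · intro h i
      by_cases hi : (i : ℕ) ∈ s
      · simpa [hF', hi, YY, rT] using h i hi
      · simp [hF', hi]
    · intro h i hi
      have h2 := h ⟨i, hsT i hi⟩
      simpa [hF', hi, YY, rT] using h2
  rw [hev, meas_cnt, hB, countY]
  have hcast : ((∏ i ∈ range T, (F' i).card * n : ℕ) : ℝ≥0∞)
      = ∏ i ∈ range T, (((F' i).card : ℝ≥0∞) * (n : ℝ≥0∞)) := by
    push_cast; rfl
  rw [hcast, card_DD]
  have hpow : ((((n : ℝ≥0∞)+1) * n) ^ T)⁻¹ = ∏ _i ∈ range T, (((n : ℝ≥0∞)+1) * n)⁻¹ := by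
    rw [Finset.prod_const, Finset.card_range, ← ENNReal.inv_pow]
  rw [hpow, ← Finset.prod_mul_distrib]
  have hterm : ∀ i, (((F' i).card : ℝ≥0∞) * (n : ℝ≥0∞)) * ((((n : ℝ≥0∞)+1) * n)⁻¹)
      = ((F' i).card : ℝ≥0∞) / ((n : ℝ≥0∞)+1) := by
    intro i
    rw [ENNReal.mul_inv (Or.inl (hn1_ne0 n)) (Or.inl (hn1_netop n))]
    rw [div_eq_mul_inv]
    calc ((F' i).card : ℝ≥0∞) * (n : ℝ≥0∞) * (((n : ℝ≥0∞)+1)⁻¹ * (n : ℝ≥0∞)⁻¹)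
        = ((F' i).card : ℝ≥0∞) * ((n : ℝ≥0∞) * (n : ℝ≥0∞)⁻¹) * ((n : ℝ≥0∞)+1)⁻¹ := by ring
      _ = ((F' i).card : ℝ≥0∞) * ((n : ℝ≥0∞)+1)⁻¹ := by
          rw [ENNReal.mul_inv_cancel (hn_ne0 n) (hn_netop n), mul_one]
  rw [Finset.prod_congr rfl (fun i _ => hterm i)]
  have h1 : ∏ i ∈ s, (((F i).card : ℝ≥0∞) / ((n : ℝ≥0∞)+1))
      = ∏ i ∈ s, (((F' i).card : ℝ≥0∞) / ((n : ℝ≥0∞)+1)) :=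
    Finset.prod_congr rfl (fun i hi => by simp [hF', hi])
  rw [h1]
  symm
  apply Finset.prod_subset (fun i hi => Finset.mem_range.2 (hsT i hi))
  intro i _ hi
  have : F' i = univ := by simp [hF', hi]
  rw [this, Finset.card_univ, Fintype.card_fin]
  have : ((Fintype.card (Fin (n+1)) : ℝ≥0∞)) = (n : ℝ≥0∞) + 1 := by
    rw [Fintype.card_fin]; push_cast; ring
  rw [show ((n+1 : ℕ) : ℝ≥0∞) = (n : ℝ≥0∞) + 1 by push_cast; ring]
  exact ENNReal.div_self (hn1_ne0 n) (hn1_netop n)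

end E
section F
variable (n : ℕ) [NeZero n]

lemma unifX (t : ℕ) (c : Fin n) : mu n {ω | XX n t ω = c} = 1 / (n : ℝ≥0∞) := by
  classical
  have h := measX n {t} (fun _ => {c})
  have hev : {ω : GG n | ∀ i ∈ ({t} : Finset ℕ), XX n i ω ∈ ({c} : Finset (Fin n))}
      = {ω | XX n t ω = c} := by
    ext ω; simp
  rw [hev] at h
  simpa using h

lemma unifY (t : ℕ) (c : Fin (n+1)) : mu n {ω | YY n t ω = c} = 1 / ((n : ℝ≥0∞) + 1) := by
  classical
  have h := measY n {t} (fun _ => {c})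
  have hev : {ω : GG n | ∀ i ∈ ({t} : Finset ℕ), YY n i ω ∈ ({c} : Finset (Fin (n+1)))}
      = {ω | YY n t ω = c} := by
    ext ω; simp
  rw [hev] at h
  simpa using h

lemma indepX : ProbabilityTheory.iIndepFun (XX n) (mu n) := by
  classical
  rw [ProbabilityTheory.iIndepFun_iff_measure_inter_preimage_eq_mul]
  intro S sets _
  set E : ℕ → Finset (Fin n) := fun i => (Set.toFinite (sets i)).toFinset with hE
  have h1 : (⋂ i ∈ S, XX n i ⁻¹' sets i) = {ω | ∀ i ∈ S, XX n i ω ∈ E i} := by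
    ext ω; simp only [Set.mem_iInter, Set.mem_preimage, Set.mem_setOf_eq, hE,
      Set.Finite.mem_toFinset]
  have h2 : ∀ i, XX n i ⁻¹' sets i = {ω | ∀ j ∈ ({i} : Finset ℕ), XX n j ω ∈ E j} := by
    intro i; ext ω
    simp only [Set.mem_preimage, Set.mem_setOf_eq, hE, Set.Finite.mem_toFinset,
      Finset.mem_singleton, forall_eq]
  rw [h1, measX]
  refine Finset.prod_congr rfl (fun i _ => ?_)
  rw [h2 i, measX]
  simp

lemma indepY : ProbabilityTheory.iIndepFun (YY n) (mu n) := by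
  classical
  rw [ProbabilityTheory.iIndepFun_iff_measure_inter_preimage_eq_mul]
  intro S sets _
  set F : ℕ → Finset (Fin (n+1)) := fun i => (Set.toFinite (sets i)).toFinset with hF
  have h1 : (⋂ i ∈ S, YY n i ⁻¹' sets i) = {ω | ∀ i ∈ S, YY n i ω ∈ F i} := by
    ext ω; simp only [Set.mem_iInter, Set.mem_preimage, Set.mem_setOf_eq, hF,
      Set.Finite.mem_toFinset]
  have h2 : ∀ i, YY n i ⁻¹' sets i = {ω | ∀ j ∈ ({i} : Finset ℕ), YY n j ω ∈ F j} := by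
    intro i; ext ω
    simp only [Set.mem_preimage, Set.mem_setOf_eq, hF, Set.Finite.mem_toFinset,
      Finset.mem_singleton, forall_eq]
  rw [h1, measY]
  refine Finset.prod_congr rfl (fun i _ => ?_)
  rw [h2 i, measY]
  simp

end F
/-- The number of distinct values among the draws `Z 0, …, Z (t-1)` of a sequence `Z`
(at a sample point `ω`); it is `0` when `t = 0`. -/
def distinctCount {Ω : Type*} {S : Type*} [DecidableEq S] (Z : ℕ → Ω → S) (t : ℕ) (ω : Ω) : ℕ :=
  ((Finset.range t).image (fun i => Z i ω)).card

/-- Claim 8: for any `n ≥ 1` there is a coupling of an i.i.d. uniform sequence `X` on a set of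
`n` coupons with an i.i.d. uniform sequence `Y` on a set of `n+1` coupons such that almost
surely, for every `t ≥ 0`, the number of distinct coupons collected by the first collector
after `t` draws is at most that of the second collector.  In particular, `C_t^1` is
stochastically dominated by `C_t^2`:  `P(C_t^1 ≥ k) ≤ P(C_t^2 ≥ k)` for all `t, k`. -/
theorem coupon_collector_coupling (n : ℕ) (hn : 1 ≤ n) :
    ∃ (Ω : Type) (_ : MeasurableSpace Ω) (μ : Measure Ω) (_ : IsProbabilityMeasure μ)
      (X : ℕ → Ω → Fin n) (Y : ℕ → Ω → Fin (n + 1)),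
      -- the `X t` are i.i.d. uniform on a set of `n` coupons
      iIndepFun X μ ∧
      (∀ t, Measurable (X t)) ∧
      (∀ t, ∀ c : Fin n, μ {ω | X t ω = c} = 1 / n) ∧
      -- the `Y t` are i.i.d. uniform on a set of `n + 1` coupons
      iIndepFun Y μ ∧
      (∀ t, Measurable (Y t)) ∧
      (∀ t, ∀ c : Fin (n + 1), μ {ω | Y t ω = c} = 1 / (n + 1)) ∧
      -- almost surely, for every `t`, `C_t^1 ≤ C_t^2`
      (∀ᵐ ω ∂μ, ∀ t, distinctCount X t ω ≤ distinctCount Y t ω) ∧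
      -- in particular, stochastic domination `C_t^1 ⪯ C_t^2` for every `t`
      (∀ t k, μ {ω | k ≤ distinctCount X t ω} ≤ μ {ω | k ≤ distinctCount Y t ω}) := by
  haveI : NeZero n := ⟨by omega⟩
  refine ⟨GG n, inferInstance, mu n, inferInstance, XX n, YY n,
    indepX n, measurable_XX n, ?_, indepY n, measurable_YY n, ?_, ?_, ?_⟩
  · intro t c
    simpa using unifX n t c
  · intro t c
    simpa using unifY n t c
  · refine Filter.Eventually.of_forall (fun ω t => ?_)
    simpa [distinctCount] using card_dom n ω t
  · intro t k
    apply measure_mono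
    intro ω h
    simp only [Set.mem_setOf_eq, distinctCount] at h ⊢
    exact le_trans h (card_dom n ω t)
end

section
/- For all integers d ≥ 2, all real p with 0 < p < 1/2, and all integers n with 1 ≤ n ≤ d−1: (1 − p_d^*)·(n/d) < (1 − p_{d+1}^*)·((n+1)/(d+1)). (This is the key inequality used in the couplings proving Theorem 2 and Lemma 6; the case n = d−1 reads (1 − p_d^*)(d−1)/d < (1 − p_{d+1}^*)d/(d+1).) -/
open Real Finset

/-- The key coupling inequality behind Theorem 2 and Lemma 6: for integers `d ≥ 2`,
real `0 < p < 1/2`, and integers `1 ≤ n ≤ d-1`,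
`(1 - p_d^*)·(n/d) < (1 - p_{d+1}^*)·((n+1)/(d+1))`. -/
theorem key_coupling_inequality (d : ℕ) (hd : 2 ≤ d) (p : ℝ) (hp0 : 0 < p)
    (hp : p < 1 / 2) (n : ℕ) (hn1 : 1 ≤ n) (hn : n ≤ d - 1) :
    (1 - pstar d p) * ((n : ℝ) / (d : ℝ)) <
      (1 - pstar (d + 1) p) * (((n : ℝ) + 1) / ((d : ℝ) + 1)) := by
  have hd' : (2:ℝ) ≤ (d:ℝ) := by exact_mod_cast hd
  have hn' : (n:ℝ) ≤ (d:ℝ) - 1 := by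
    have h : (n:ℝ) ≤ ((d-1 : ℕ):ℝ) := by exact_mod_cast hn
    rw [Nat.cast_sub (by omega)] at h; simpa using h
  have hn1' : (1:ℝ) ≤ (n:ℝ) := by exact_mod_cast hn1
  have h1 : (0:ℝ) < (d:ℝ) - ((d:ℝ)+1)*p := by nlinarith
  have h2 : (0:ℝ) < ((d:ℝ)+1) - ((d:ℝ)+1+1)*p := by nlinarith
  have hdpos : (0:ℝ) < (d:ℝ) := by linarith
  simp only [pstar]
  push_cast
  have key : (n:ℝ) * ((↑d + 1) - (↑d + 2) * p) < ((n:ℝ)+1) * (↑d - (↑d + 1) * p) := by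
    nlinarith [mul_nonneg hp0.le (sub_nonneg.mpr hn')]
  have e1 : (1 - p * (↑d - 1) / (↑d - (↑d + 1) * p)) = ↑d * (1 - 2*p) / (↑d - (↑d + 1) * p) := by
    rw [one_sub_div h1.ne']; congr 1; ring
  have e2 : (1 - p * (↑d + 1 - 1) / (↑d + 1 - (↑d + 1 + 1) * p)) = (↑d+1) * (1 - 2*p) / (↑d + 1 - (↑d + 1 + 1) * p) := by
    rw [one_sub_div h2.ne']; congr 1; ring
  rw [e1, e2, div_mul_div_comm, div_mul_div_comm, div_lt_div_iff₀ (by positivity) (by positivity)]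
  have hfac : (0:ℝ) < ↑d * (↑d + 1) * (1 - 2 * p) := mul_pos (mul_pos hdpos (by linarith)) (by linarith)
  nlinarith [mul_lt_mul_of_pos_right key hfac]
end

section
/- For every integer d ≥ 2 and every real p ∈ (1/(d+1), 1/2): (a) f^{d,p}(λ) converges as λ → ∞ to exp(−p_d^*/d − (d−1)/d); (b) this limit is strictly smaller than f^{d,p}(0) = e^{−p_d^*}; and consequently (c) the supremum M^{d,p} is attained, i.e., there exists λ₀ ∈ [0,∞) with f^{d,p}(λ₀) = M^{d,p}. (Intermediate claims in the proof of Lemma 7: in the variable y = e^{−λ}, the function g(y) = f^{d,p}(−log y) extends continuously to [0,1] with g(0) = exp(−p_d^*/d − (d−1)/d) < g(1) = e^{−p_d^*}.) -/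
open Real Finset

lemma frogT_succ (x y : ℝ) (k : ℕ) :
    frogT x y (k+1) = 1 - ∑ i ∈ Finset.range (k+1),
      (((k + 1).choose i : ℕ) : ℝ) * (x * y ^ (i + 1)) ^ (k + 1 - i) * frogT x y i := by
  rw [frogT]
  rw [Finset.sum_attach (Finset.range (k+1))
    (fun i => (((k + 1).choose i : ℕ) : ℝ) * (x * y ^ (i + 1)) ^ (k + 1 - i) * frogT x y i)]

lemma frogT_zero_right (x : ℝ) (k : ℕ) : frogT x 0 k = 1 := by
  cases k with
  | zero => rw [frogT]
  | succ m =>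
    rw [frogT_succ, Finset.sum_eq_zero, sub_zero]
    intro i hi
    have : m + 1 - i ≠ 0 := by have := Finset.mem_range.mp hi; omega
    simp [this]

lemma frogT_continuous (x : ℝ) (k : ℕ) : Continuous fun y => frogT x y k := by
  induction k using Nat.strong_induction_on with
  | _ k ih =>
    match k with
    | 0 => simpa [frogT] using continuous_const
    | k+1 =>
      simp only [frogT_succ]
      exact continuous_const.sub <| continuous_finset_sum _ fun i hi =>
        ((continuous_const.mul ((continuous_const.mul (continuous_pow _)).pow _)).mul
          (ih i (Finset.mem_range.mp hi)))

lemma frogS_sum (k : ℕ) (x y : ℝ) :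
    ∑ u ∈ Finset.range (k+1), frogS (k+1) u x y = 1 := by
  rw [Finset.sum_range_succ]
  have hlast : frogS (k+1) k x y = frogT x y k := by simp [frogS]
  cases k with
  | zero => rw [hlast, frogT]; simp
  | succ m =>
    rw [hlast, frogT_succ]
    have h : ∀ i ∈ Finset.range (m+1), frogS (m+2) i x y
        = (((m+1).choose i : ℕ) : ℝ) * (x*y^(i+1))^(m+1-i) * frogT x y i := by
      intro i hi; simp [frogS]
    rw [Finset.sum_congr rfl h]; ring

/-- exponent of the `u`-th term after simplification -/
noncomputable def frogB (d : ℕ) (p : ℝ) (u : ℕ) : ℝ :=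
  (1 - phat p * (1 + (u : ℝ))) - (((u+1)*(d-1-u) : ℕ) : ℝ) * (1 - phat p) / ((d : ℝ) - 1)

lemma frogTerm_eq (d : ℕ) (hd : 2 ≤ d) (p : ℝ) (u : ℕ) (l : ℝ) :
    Real.exp ((1 - phat p * (1 + (u : ℝ))) * l) * frogS d u (Phi d p) (Lam d p l)
      = (((d-1).choose u : ℕ) : ℝ) * (Phi d p) ^ (d-1-u)
        * Real.exp (frogB d p u * l) * frogT (Phi d p) (Lam d p l) u := by
  have hd1 : ((d : ℝ) - 1) ≠ 0 := by
    have : (2:ℝ) ≤ d := by exact_mod_cast hd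
    linarith
  simp only [frogS, Lam, frogB]
  rw [mul_pow, ← pow_mul, ← Real.exp_nat_mul]
  rw [show (u+1)*(d-1-u) = (u+1)*(d-1-u) from rfl]
  set m : ℕ := (u+1)*(d-1-u) with hm
  rw [show Real.exp ((1 - phat p * (1 + (u:ℝ))) * l) *
      ((((d-1).choose u : ℕ) : ℝ) * ((Phi d p) ^ (d-1-u) *
        Real.exp ((m:ℝ) * (-((1 - phat p) * l) / ((d:ℝ) - 1)))) * frogT (Phi d p)
          (Real.exp (-((1 - phat p) * l) / ((d:ℝ) - 1))) u)
    = (((d-1).choose u : ℕ) : ℝ) * (Phi d p) ^ (d-1-u)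
      * (Real.exp ((1 - phat p * (1 + (u:ℝ))) * l) *
          Real.exp ((m:ℝ) * (-((1 - phat p) * l) / ((d:ℝ) - 1))))
      * frogT (Phi d p) (Real.exp (-((1 - phat p) * l) / ((d:ℝ) - 1))) u from by ring]
  rw [← Real.exp_add]
  congr 2
  field_simp
  ring

lemma frogB_zero (d : ℕ) (hd : 2 ≤ d) (p : ℝ) : frogB d p 0 = 0 := by
  have hd1 : ((d : ℝ) - 1) ≠ 0 := by
    have : (2:ℝ) ≤ d := by exact_mod_cast hd
    linarith
  rw [frogB, show (0+1)*(d-1-0) = d-1 from by omega,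
    show ((d-1:ℕ):ℝ) = (d:ℝ)-1 from by push_cast [show 1 ≤ d from by omega]; ring]
  push_cast
  field_simp
  ring

lemma frogB_neg (d : ℕ) (hd : 2 ≤ d) (p : ℝ)
    (hp : p ∈ Set.Ioo (1 / ((d : ℝ) + 1)) (1 / 2)) (u : ℕ) (hu1 : 1 ≤ u) (hud : u < d) :
    frogB d p u < 0 := by
  obtain ⟨hp1, hp2⟩ := hp
  have hd2 : (2:ℝ) ≤ (d:ℝ) := by exact_mod_cast hd
  have hd1 : (0:ℝ) < (d:ℝ) - 1 := by linarith
  have hp0 : 0 < p := lt_trans (by positivity) hp1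
  have h1p : 0 < 1 - p := by linarith
  have hph0 : 0 < phat p := div_pos hp0 h1p
  have hph1 : phat p < 1 := (div_lt_one h1p).mpr (by linarith)
  have h4 : 1 < p * ((d:ℝ) + 1) := by
    rw [div_lt_iff₀ (by positivity)] at hp1; linarith
  have hphd : 1 < phat p * d := by
    rw [phat, div_mul_eq_mul_div, one_lt_div h1p]; nlinarith
  have hu1' : (1:ℝ) ≤ (u:ℝ) := by exact_mod_cast hu1
  rcases eq_or_lt_of_le (Nat.succ_le_of_lt hud) with heq | hlt
  · -- u = d - 1, so d - 1 - u = 0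
    have h0 : d - 1 - u = 0 := by omega
    have hcast : ((u:ℝ) + 1) = (d:ℝ) := by
      have : u + 1 = d := heq
      exact_mod_cast this
    rw [frogB, h0]
    simp only [Nat.mul_zero, Nat.cast_zero, zero_mul, zero_div, sub_zero]
    nlinarith
  · -- 1 ≤ u ≤ d - 2
    have hmge : d - 1 ≤ (u+1)*(d-1-u) := by
      have hv1 : 1 ≤ d - 1 - u := by omega
      have : (u+1)*(d-1-u) = u*(d-1-u) + (d-1-u) := by ring
      have h5 : u ≤ u * (d-1-u) := Nat.le_mul_of_pos_right u (by omega)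
      omega
    have hmge' : (d:ℝ) - 1 ≤ (((u+1)*(d-1-u) : ℕ) : ℝ) := by
      rw [show (d:ℝ)-1 = ((d-1:ℕ):ℝ) from by push_cast [show 1 ≤ d from by omega]; ring]
      exact_mod_cast hmge
    have key : (1 - phat p) ≤ (((u+1)*(d-1-u) : ℕ) : ℝ) * (1 - phat p) / ((d:ℝ) - 1) := by
      rw [le_div_iff₀ hd1]
      nlinarith
    rw [frogB]
    nlinarith


/-- Intermediate claims in the proof of Lemma 7: for `d ≥ 2` and `p ∈ (1/(d+1), 1/2)`:
(a) `f^{d,p}(λ) → exp(-p_d^*/d - (d-1)/d)` as `λ → ∞`;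
(b) this limit is strictly smaller than `f^{d,p}(0) = e^{-p_d^*}`;
(c) the supremum `M^{d,p}` is attained at some `λ₀ ≥ 0`. -/
theorem frogF_limit_and_max (d : ℕ) (hd : 2 ≤ d) (p : ℝ)
    (hp : p ∈ Set.Ioo (1 / ((d : ℝ) + 1)) (1 / 2)) :
    Filter.Tendsto (frogF d p) Filter.atTop
        (nhds (Real.exp (-(pstar d p) / (d : ℝ) - ((d : ℝ) - 1) / (d : ℝ)))) ∧
      Real.exp (-(pstar d p) / (d : ℝ) - ((d : ℝ) - 1) / (d : ℝ)) < frogF d p 0 ∧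
      frogF d p 0 = Real.exp (-(pstar d p)) ∧
      ∃ l₀ : ℝ, 0 ≤ l₀ ∧ frogF d p l₀ = frogM d p := by
  obtain ⟨hp1, hp2⟩ := hp
  have hd2 : (2:ℝ) ≤ (d:ℝ) := by exact_mod_cast hd
  have hd0 : (0:ℝ) < d := by linarith
  have hd1 : (0:ℝ) < (d:ℝ) - 1 := by linarith
  have hp0 : 0 < p := lt_trans (by positivity) hp1
  have h1p : 0 < 1 - p := by linarith
  have hph0 : 0 < phat p := div_pos hp0 h1p
  have hph1 : phat p < 1 := (div_lt_one h1p).mpr (by linarith)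
  have hden : 0 < (d:ℝ) - ((d:ℝ)+1)*p := by nlinarith
  have hps1 : pstar d p < 1 := by rw [pstar, div_lt_one hden]; nlinarith
  have hcast : ((d - 1 : ℕ) : ℝ) = (d:ℝ) - 1 := by
    have h1 : 1 ≤ d := by omega
    push_cast [h1]; ring
  -- limit of Lam
  have hlamlin : Filter.Tendsto (fun l : ℝ => -((1 - phat p) * l) / ((d:ℝ) - 1))
      Filter.atTop Filter.atBot := by
    have heq : (fun l : ℝ => -((1 - phat p) * l) / ((d:ℝ) - 1))
        = fun l : ℝ => (-(1 - phat p) / ((d:ℝ) - 1)) * l := by funext l; ring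
    rw [heq]
    exact Filter.Tendsto.const_mul_atTop_of_neg
      (div_neg_of_neg_of_pos (by linarith) hd1) Filter.tendsto_id
  have hlam : Filter.Tendsto (Lam d p) Filter.atTop (nhds 0) := by
    have := Real.tendsto_exp_atBot.comp hlamlin
    exact this
  -- limit of each term
  have key : ∀ u ∈ Finset.range d, Filter.Tendsto
      (fun l => Real.exp ((1 - phat p * (1 + (u : ℝ))) * l) * frogS d u (Phi d p) (Lam d p l))
      Filter.atTop (nhds (if u = 0 then (Phi d p)^(d-1) else 0)) := by
    intro u hu
    have hTu : Filter.Tendsto (fun l => frogT (Phi d p) (Lam d p l) u)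
        Filter.atTop (nhds 1) := by
      have := ((frogT_continuous (Phi d p) u).tendsto 0).comp hlam
      rwa [frogT_zero_right] at this
    by_cases hu0 : u = 0
    · subst hu0
      simp only [if_pos rfl]
      have hconst : ∀ l : ℝ,
          Real.exp ((1 - phat p * (1 + ((0:ℕ) : ℝ))) * l) * frogS d 0 (Phi d p) (Lam d p l)
            = (Phi d p)^(d-1) := by
        intro l
        rw [frogTerm_eq d hd, frogB_zero d hd]
        simp [frogT]
      rw [funext hconst]
      exact tendsto_const_nhds
    · simp only [if_neg hu0]
      have hB : frogB d p u < 0 :=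
        frogB_neg d hd p ⟨hp1, hp2⟩ u (by omega) (Finset.mem_range.mp hu)
      have hexp : Filter.Tendsto (fun l : ℝ => Real.exp (frogB d p u * l))
          Filter.atTop (nhds 0) := by
        apply Real.tendsto_exp_atBot.comp
        exact Filter.Tendsto.const_mul_atTop_of_neg hB Filter.tendsto_id
      have h1 : Filter.Tendsto
          (fun l => (((d-1).choose u : ℕ) : ℝ) * (Phi d p)^(d-1-u)
            * Real.exp (frogB d p u * l) * frogT (Phi d p) (Lam d p l) u)
          Filter.atTop (nhds ((((d-1).choose u : ℕ) : ℝ) * (Phi d p)^(d-1-u) * 0 * 1)) :=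
        ((tendsto_const_nhds.mul hexp).mul hTu)
      rw [mul_zero, zero_mul] at h1
      exact h1.congr fun l => (frogTerm_eq d hd p u l).symm
  have hsum := tendsto_finset_sum (Finset.range d) key
  have hsumval : (∑ u ∈ Finset.range d, if u = 0 then (Phi d p)^(d-1) else 0)
      = (Phi d p)^(d-1) := by
    rw [Finset.sum_eq_single_of_mem 0 (Finset.mem_range.mpr (by omega))]
    · simp
    · intro b _ hb; simp [hb]
  rw [hsumval] at hsum
  have ha' : Filter.Tendsto (frogF d p) Filter.atTop
      (nhds (Real.exp (-(pstar d p)) * (Phi d p)^(d-1))) := by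
    have := hsum.const_mul (Real.exp (-(pstar d p)))
    exact this
  have hval : Real.exp (-(pstar d p)) * (Phi d p)^(d-1)
      = Real.exp (-(pstar d p) / (d : ℝ) - ((d : ℝ) - 1) / (d : ℝ)) := by
    rw [Phi, ← Real.exp_nat_mul, ← Real.exp_add]
    congr 1
    rw [hcast]
    field_simp
    ring
  rw [hval] at ha'
  -- value at 0
  have h0 : frogF d p 0 = Real.exp (-(pstar d p)) := by
    obtain ⟨k, hk⟩ : ∃ k, d = k + 1 := ⟨d-1, by omega⟩
    subst hk
    have hlam0 : Lam (k+1) p 0 = 1 := by simp [Lam]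
    simp only [frogF, mul_zero, Real.exp_zero, one_mul, hlam0]
    rw [frogS_sum k (Phi (k+1) p) 1, mul_one]
  -- limit < value at 0
  have hblt : Real.exp (-(pstar d p) / (d : ℝ) - ((d : ℝ) - 1) / (d : ℝ))
      < frogF d p 0 := by
    rw [h0, Real.exp_lt_exp, ← sub_div, div_lt_iff₀ hd0]
    nlinarith [mul_pos (by linarith : (0:ℝ) < 1 - pstar d p) hd1]
  -- continuity
  have hLc : Continuous (Lam d p) := by
    unfold Lam; fun_prop
  have hcont : Continuous (frogF d p) := by
    unfold frogF
    apply continuous_const.mul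
    apply continuous_finset_sum
    intro u _
    refine Continuous.mul ?_ ?_
    · exact Real.continuous_exp.comp (continuous_const.mul continuous_id)
    · unfold frogS
      exact (continuous_const.mul ((continuous_const.mul (hLc.pow _)).pow _)).mul
        ((frogT_continuous _ u).comp hLc)
  -- attainment of sup
  have hev : ∀ᶠ l in Filter.atTop, frogF d p l < frogF d p 0 :=
    ha'.eventually_lt_const hblt
  obtain ⟨A, hA⟩ := Filter.eventually_atTop.mp hev
  obtain ⟨l₀, hl₀mem, hmax⟩ := isCompact_Icc.exists_isMaxOn
    (s := Set.Icc (0:ℝ) (max A 0)) ⟨0, by simp⟩ hcont.continuousOn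
  rw [isMaxOn_iff] at hmax
  have hub : ∀ l ∈ Set.Ici (0:ℝ), frogF d p l ≤ frogF d p l₀ := by
    intro l hl
    by_cases hcase : l ≤ max A 0
    · exact hmax l ⟨hl, hcase⟩
    · push_neg at hcase
      have h1 : frogF d p l < frogF d p 0 :=
        hA l (le_of_lt (lt_of_le_of_lt (le_max_left A 0) hcase))
      have h2 : frogF d p 0 ≤ frogF d p l₀ := hmax 0 ⟨le_refl 0, le_max_right A 0⟩
      linarith
  have hgr : IsGreatest (frogF d p '' Set.Ici 0) (frogF d p l₀) :=
    ⟨⟨l₀, hl₀mem.1, rfl⟩, by rintro _ ⟨l, hl, rfl⟩; exact hub l hl⟩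
  exact ⟨ha', hblt, h0, l₀, hl₀mem.1, hgr.csSup_eq.symm⟩
end
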